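/- arXiv:1807.00594 — 3 statements merged into one kernel-verified Lean document; each statement's English description precedes it below -/
import Mathlib

section
/- For any digraph D = (V, A), any T ⊆ V, and any E ⊆ V, the set system Γ(D, T, E) = (E, I) with I = { X ⊆ E : there is a routing from X to T in D } satisfies the independence axioms of a matroid (the empty set is independent, independence is downward closed, and the augmentation property holds). -/
open Set

/-- `p` is a path in the digraph on vertex type `α` with arc relation `A`:
a nonempty, non-repeating list of vertices with consecutive vertices joined by arcs. -/
def IsDiPath {α : Type*} (A : α → α → Prop) (p : List α) : Prop :=
  p ≠ [] ∧ p.Nodup ∧ p.Chain' A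

/-- `R` is a routing from `X` to `Y` in the digraph with arc relation `A`:
a family of pairwise vertex-disjoint paths such that every `x ∈ X` is the first
vertex of some path of `R`, and every path of `R` ends in `Y`. -/
def IsRouting {α : Type*} (A : α → α → Prop) (R : Set (List α)) (X Y : Set α) : Prop :=
  (∀ p ∈ R, IsDiPath A p) ∧
  (∀ x ∈ X, ∃ p ∈ R, p.head? = some x) ∧
  (∀ p ∈ R, ∃ y ∈ Y, p.getLast? = some y) ∧
  (∀ p ∈ R, ∀ q ∈ R, p ≠ q → ∀ v, v ∈ p → v ∉ q)

namespace Gammoid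

variable {α : Type*}

/-- `S` separates `Z` from `T`: every `A`-walk from `Z` to `T` meets `S`. -/
def Sep (A : α → α → Prop) (Z T S : Set α) : Prop :=
  ∀ w : List α, w ≠ [] → w.Chain' A → (∀ z ∈ w.head?, z ∈ Z) →
    (∀ t ∈ w.getLast?, t ∈ T) → ∃ v ∈ S, v ∈ w

/-- A finite family of pairwise disjoint paths from `Z` to `T`. -/
def Fam (A : α → α → Prop) (R : Finset (List α)) (Z T : Set α) : Prop :=
  (∀ p ∈ R, IsDiPath A p) ∧
  (∀ p ∈ R, ∀ z ∈ p.head?, z ∈ Z) ∧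
  (∀ p ∈ R, ∀ t ∈ p.getLast?, t ∈ T) ∧
  (∀ p ∈ R, ∀ q ∈ R, p ≠ q → ∀ v, v ∈ p → v ∉ q)

/-- relation attached to a finite arc set -/
def R2 (F : Finset (α × α)) : α → α → Prop := fun x y => (x, y) ∈ F

section ListHelpers

theorem mem_of_getLast?_eq {l : List α} {a : α} (h : l.getLast? = some a) : a ∈ l := by
  cases l with
  | nil => simp at h
  | cons x xs =>
    rw [List.getLast?_eq_getLast (l := x :: xs) (by simp)] at h
    rw [← Option.some_inj.1 h]
    exact List.getLast_mem _

theorem mem_of_head?_eq {l : List α} {a : α} (h : l.head? = some a) : a ∈ l := by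
  cases l with
  | nil => simp at h
  | cons x xs => simp at h; simp [h]

theorem head?_append_cons (l₁ l₂ l₂' : List α) (x : α) :
    (l₁ ++ x :: l₂).head? = (l₁ ++ x :: l₂').head? := by
  cases l₁ <;> simp

theorem head?_append_left {l₁ : List α} (h : l₁ ≠ []) (l₂ : List α) :
    (l₁ ++ l₂).head? = l₁.head? := by
  cases l₁ with
  | nil => simp at h
  | cons a t => simp

theorem split_first {P : α → Prop} {l : List α} (h : ∃ v ∈ l, P v) :
    ∃ l₁ v l₂, l = l₁ ++ v :: l₂ ∧ P v ∧ ∀ w ∈ l₁, ¬ P w := by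
  induction l with
  | nil => simp at h
  | cons x xs ih =>
    by_cases hx : P x
    · exact ⟨[], x, xs, rfl, hx, by simp⟩
    · obtain ⟨v, hv, hPv⟩ := h
      rcases List.mem_cons.1 hv with rfl | hv'
      · exact absurd hPv hx
      · obtain ⟨l₁, v', l₂, hdec, hPv', hno⟩ := ih ⟨v, hv', hPv⟩
        refine ⟨x :: l₁, v', l₂, by simp [hdec], hPv', ?_⟩
        rintro w hw
        rcases List.mem_cons.1 hw with rfl | hw'
        · exact hx
        · exact hno w hw'

theorem split_last {P : α → Prop} {l : List α} (h : ∃ v ∈ l, P v) :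
    ∃ l₁ v l₂, l = l₁ ++ v :: l₂ ∧ P v ∧ ∀ w ∈ l₂, ¬ P w := by
  induction l with
  | nil => simp at h
  | cons x xs ih =>
    by_cases hxs : ∃ v ∈ xs, P v
    · obtain ⟨l₁, v', l₂, hdec, hPv', hno⟩ := ih hxs
      exact ⟨x :: l₁, v', l₂, by simp [hdec], hPv', hno⟩
    · obtain ⟨v, hv, hPv⟩ := h
      have : v = x := by
        rcases List.mem_cons.1 hv with rfl | hv'
        · rfl
        · exact absurd ⟨v, hv', hPv⟩ hxs
      subst this
      exact ⟨[], v, xs, rfl, hPv, fun w hw hPw => hxs ⟨w, hw, hPw⟩⟩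

theorem indexOf_lt_of_mem_take [DecidableEq α] {l : List α} {c : α} {n : ℕ}
    (h : c ∈ l.take n) : l.idxOf c < n := by
  induction l generalizing n with
  | nil => simp at h
  | cons a t ih =>
    cases n with
    | zero => simp at h
    | succ m =>
      simp only [List.take_succ_cons] at h
      rcases List.mem_cons.1 h with rfl | h'
      · simp [List.idxOf_cons_self]
      · by_cases hca : c = a
        · subst hca; simp [List.idxOf_cons_self]
        · rw [List.idxOf_cons_ne _ (fun h => hca h.symm)]
          have := ih h'
          omega

/-- glue a prefix of one chain to a suffix of another at a common element -/
theorem chain'_glue {A : α → α → Prop} {l₁ l₂ m₁ m₂ : List α} {x : α}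
    (h₁ : (l₁ ++ x :: l₂).Chain' A) (h₂ : (m₁ ++ x :: m₂).Chain' A) :
    (l₁ ++ x :: m₂).Chain' A := by
  have e₁ : l₁ ++ x :: m₂ = (l₁ ++ [x]) ++ m₂ := by simp
  have hpre : (l₁ ++ [x]).Chain' A :=
    h₁.prefix ⟨l₂, by simp⟩
  have hsuf : m₂.Chain' A := h₂.suffix ⟨m₁ ++ [x], by simp⟩
  have hlink : ∀ a ∈ (l₁ ++ [x]).getLast?, ∀ b ∈ m₂.head?, A a b := by
    have h₂' : ((m₁ ++ [x]) ++ m₂).Chain' A := by simpa using h₂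
    have hthis := (List.isChain_append.1 h₂').2.2
    intro a ha b hb
    rw [List.getLast?_concat] at ha
    exact hthis a (by rw [List.getLast?_concat]; exact ha) b hb
  rw [e₁]
  exact List.isChain_append.2 ⟨hpre, hsuf, hlink⟩

theorem chain'_sub_or_uses {A : α → α → Prop} {u v : α} {w : List α} (h : w.Chain' A) :
    w.Chain' (fun a b => A a b ∧ ¬(a = u ∧ b = v)) ∨ ∃ l₁ l₂, w = l₁ ++ u :: v :: l₂ := by
  induction w with
  | nil => left; simp [List.Chain']
  | cons x t ih =>
    cases t with
    | nil => left; simp [List.Chain']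
    | cons y s =>
      rw [List.Chain', List.isChain_cons_cons] at h
      by_cases hxy : x = u ∧ y = v
      · right; exact ⟨[], s, by simp [hxy.1, hxy.2]⟩
      · rcases ih h.2 with hc | ⟨l₁, l₂, hdec⟩
        · left; exact List.isChain_cons_cons.2 ⟨⟨h.1, hxy⟩, hc⟩
        · right; exact ⟨x :: l₁, l₂, by simp [hdec]⟩

theorem mem_dropLast_uses (m₁ m₂ : List α) (u v : α) : u ∈ (m₁ ++ u :: v :: m₂).dropLast := by
  rw [List.dropLast_append_cons]
  refine List.mem_append_right _ ?_
  have h : (u :: v :: m₂) = [u] ++ v :: m₂ := by simp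
  rw [h, List.dropLast_append_cons]
  simp

theorem mem_tail_uses (m₁ m₂ : List α) (u v : α) : v ∈ (m₁ ++ u :: v :: m₂).tail := by
  cases m₁ <;> simp

theorem eq_cons_of_head? {l : List α} {a : α} (h : l.head? = some a) : l = a :: l.tail := by
  cases l with
  | nil => simp at h
  | cons b t => simp at h; subst h; rfl

theorem not_mem_tail_of_nodup_of_head? {l : List α} {a : α} (hnd : l.Nodup)
    (h : l.head? = some a) : a ∉ l.tail := by
  cases l with
  | nil => simp
  | cons b t =>
    simp at h
    subst h
    exact (List.nodup_cons.1 hnd).1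

end ListHelpers

section FamLemmas
variable {A : α → α → Prop} {Z T : Set α}

theorem sep_mono_source {Z' S : Set α} (h : Sep A Z T S) (hZ : Z' ⊆ Z) : Sep A Z' T S :=
  fun w hw hc hh ht => h w hw hc (fun z hz => hZ (hh z hz)) ht

theorem sep_anti_rel {A' : α → α → Prop} {S : Set α} (h : Sep A Z T S)
    (hle : ∀ x y, A' x y → A x y) : Sep A' Z T S :=
  fun w hw hc hh ht => h w hw (hc.imp hle) hh ht

theorem fam_mono_rel {A' : α → α → Prop} {R : Finset (List α)} (h : Fam A R Z T)
    (hle : ∀ x y, A x y → A' x y) : Fam A' R Z T :=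
  ⟨fun p hp => ⟨(h.1 p hp).1, (h.1 p hp).2.1, (h.1 p hp).2.2.imp hle⟩, h.2.1, h.2.2.1, h.2.2.2⟩

theorem fam_injOn {R : Finset (List α)}
    (hdisj : ∀ p ∈ R, ∀ q ∈ R, p ≠ q → ∀ v, v ∈ p → v ∉ q)
    (f : List α → α) (hf : ∀ p ∈ R, f p ∈ p) : Set.InjOn f ↑R := by
  intro p hp q hq heq
  by_contra hne
  exact hdisj p hp q hq hne (f p) (hf p hp) (heq ▸ hf q hq)

theorem fam_nonempty_mem {R : Finset (List α)} (hF : Fam A R Z T) {p : List α} (hp : p ∈ R) :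
    p ≠ [] := (hF.1 p hp).1

theorem fam_card_le_sep {R : Finset (List α)} (hF : Fam A R Z T) (S : Finset α)
    (hS : Sep A Z T ↑S) : R.card ≤ S.card := by
  classical
  rcases R.eq_empty_or_nonempty with rfl | ⟨p₀, hp₀⟩
  · simp
  haveI : Inhabited α := ⟨p₀.head (fam_nonempty_mem hF hp₀)⟩
  have hex : ∀ p, p ∈ R → ∃ v, v ∈ S ∧ v ∈ p := by
    intro p hp
    obtain ⟨hne, _, hch⟩ := hF.1 p hp
    obtain ⟨v, hv1, hv2⟩ := hS p hne hch (hF.2.1 p hp) (hF.2.2.1 p hp)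
    exact ⟨v, by simpa using hv1, hv2⟩
  set f : List α → α := fun p => if h : ∃ v, v ∈ S ∧ v ∈ p then h.choose else default with hf
  apply Finset.card_le_card_of_injOn f
  · intro p hp
    have h := hex p hp
    simp only [hf, dif_pos h]
    exact h.choose_spec.1
  · apply fam_injOn hF.2.2.2
    intro p hp
    have h := hex p hp
    simp only [hf, dif_pos h]
    exact h.choose_spec.2

theorem fam_card_le_finsetSource {R : Finset (List α)} {Zf : Finset α}
    (hF : Fam A R ↑Zf T) : R.card ≤ Zf.card := by
  classical
  rcases R.eq_empty_or_nonempty with rfl | ⟨p₀, hp₀⟩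
  · simp
  haveI : Inhabited α := ⟨p₀.head (fam_nonempty_mem hF hp₀)⟩
  set f : List α → α := fun p => p.head?.getD default with hfdef
  have hfp : ∀ p, p ∈ R → f p ∈ p := by
    intro p hp
    have hne := fam_nonempty_mem hF hp
    cases p with
    | nil => exact absurd rfl hne
    | cons a t => simp [hfdef]
  apply Finset.card_le_card_of_injOn f
  · intro p hp
    have hne := fam_nonempty_mem hF hp
    have := hF.2.1 p hp
    cases p with
    | nil => exact absurd rfl hne
    | cons a t => simpa [hfdef] using this a rfl
  · exact fam_injOn hF.2.2.2 f hfp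

theorem fam_card_le_finsetTarget {R : Finset (List α)} {Tf : Finset α}
    (hF : Fam A R Z ↑Tf) : R.card ≤ Tf.card := by
  classical
  rcases R.eq_empty_or_nonempty with rfl | ⟨p₀, hp₀⟩
  · simp
  haveI : Inhabited α := ⟨p₀.head (fam_nonempty_mem hF hp₀)⟩
  set f : List α → α := fun p => p.getLast?.getD default with hfdef
  have hfp : ∀ p, p ∈ R → f p ∈ p := by
    intro p hp
    have hne := fam_nonempty_mem hF hp
    have : p.getLast? = some (p.getLast hne) := List.getLast?_eq_getLast hne
    rw [hfdef]
    simp only [this, Option.getD_some]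
    exact mem_of_getLast?_eq this
  apply Finset.card_le_card_of_injOn f
  · intro p hp
    have hne := fam_nonempty_mem hF hp
    have hl : p.getLast? = some (p.getLast hne) := List.getLast?_eq_getLast hne
    have := hF.2.2.1 p hp _ (by rw [hl]; rfl)
    rw [hfdef]
    simp only [hl, Option.getD_some]
    simpa using this
  · exact fam_injOn hF.2.2.2 f hfp

theorem fam_head_onto {R : Finset (List α)} {Zf : Finset α}
    (hF : Fam A R ↑Zf T) (hcard : Zf.card ≤ R.card) :
    ∀ z ∈ Zf, ∃ p ∈ R, p.head? = some z := by
  classical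
  intro z hz
  have hR : R.Nonempty := by
    rw [← Finset.card_pos]
    have : 0 < Zf.card := Finset.card_pos.2 ⟨z, hz⟩
    omega
  obtain ⟨p₀, hp₀⟩ := hR
  haveI : Inhabited α := ⟨p₀.head (fam_nonempty_mem hF hp₀)⟩
  set f : List α → α := fun p => p.head?.getD default with hfdef
  have hfp : ∀ p, p ∈ R → f p ∈ p := by
    intro p hp
    have hne := fam_nonempty_mem hF hp
    cases p with
    | nil => exact absurd rfl hne
    | cons a t => simp [hfdef]
  have hmaps : ∀ p ∈ R, f p ∈ Zf := by
    intro p hp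
    have hne := fam_nonempty_mem hF hp
    have := hF.2.1 p hp
    cases p with
    | nil => exact absurd rfl hne
    | cons a t => simpa [hfdef] using this a rfl
  have himg : R.image f = Zf := by
    apply Finset.eq_of_subset_of_card_le
    · intro x hx
      obtain ⟨p, hp, rfl⟩ := Finset.mem_image.1 hx
      exact hmaps p hp
    · rw [Finset.card_image_of_injOn (fam_injOn hF.2.2.2 f hfp)]
      exact hcard
  rw [← himg] at hz
  obtain ⟨p, hp, hfz⟩ := Finset.mem_image.1 hz
  refine ⟨p, hp, ?_⟩
  have hne := fam_nonempty_mem hF hp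
  cases p with
  | nil => exact absurd rfl hne
  | cons a t => simp [hfdef] at hfz; simp [hfz]

theorem fam_last_onto {R : Finset (List α)} {Tf : Finset α}
    (hF : Fam A R Z ↑Tf) (hcard : Tf.card ≤ R.card) :
    ∀ s ∈ Tf, ∃ p ∈ R, p.getLast? = some s := by
  classical
  intro s hs
  have hR : R.Nonempty := by
    rw [← Finset.card_pos]
    have : 0 < Tf.card := Finset.card_pos.2 ⟨s, hs⟩
    omega
  obtain ⟨p₀, hp₀⟩ := hR
  haveI : Inhabited α := ⟨p₀.head (fam_nonempty_mem hF hp₀)⟩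
  set f : List α → α := fun p => p.getLast?.getD default with hfdef
  have hfp : ∀ p, p ∈ R → f p ∈ p := by
    intro p hp
    have hne := fam_nonempty_mem hF hp
    have hl : p.getLast? = some (p.getLast hne) := List.getLast?_eq_getLast hne
    rw [hfdef]; simp only [hl, Option.getD_some]
    exact mem_of_getLast?_eq hl
  have hmaps : ∀ p ∈ R, f p ∈ Tf := by
    intro p hp
    have hne := fam_nonempty_mem hF hp
    have hl : p.getLast? = some (p.getLast hne) := List.getLast?_eq_getLast hne
    have := hF.2.2.1 p hp _ (by rw [hl]; rfl)
    rw [hfdef]; simp only [hl, Option.getD_some]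
    simpa using this
  have himg : R.image f = Tf := by
    apply Finset.eq_of_subset_of_card_le
    · intro x hx
      obtain ⟨p, hp, rfl⟩ := Finset.mem_image.1 hx
      exact hmaps p hp
    · rw [Finset.card_image_of_injOn (fam_injOn hF.2.2.2 f hfp)]
      exact hcard
  rw [← himg] at hs
  obtain ⟨p, hp, hfz⟩ := Finset.mem_image.1 hs
  refine ⟨p, hp, ?_⟩
  have hne := fam_nonempty_mem hF hp
  have hl : p.getLast? = some (p.getLast hne) := List.getLast?_eq_getLast hne
  rw [hfdef] at hfz
  simp only [hl, Option.getD_some] at hfz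
  rw [hl, hfz]

/-- If `S` is a separator of card at most the number of paths, then each path of the
family meets `S` in exactly one vertex, and every vertex of `S` is on some path. -/
theorem sep_tight {R : Finset (List α)} (hF : Fam A R Z T) (S : Finset α)
    (hS : Sep A Z T ↑S) (hcard : S.card ≤ R.card) :
    (∀ p ∈ R, ∀ c ∈ p, c ∈ S → ∀ c' ∈ p, c' ∈ S → c = c') ∧
    (∀ s ∈ S, ∃ p ∈ R, s ∈ p) := by
  classical
  set g : List α → Finset α := fun p => S.filter (· ∈ p) with hg
  have hdisj : ∀ p ∈ R, ∀ q ∈ R, p ≠ q → Disjoint (g p) (g q) := by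
    intro p hp q hq hne
    rw [Finset.disjoint_left]
    intro c hc hc'
    simp only [hg, Finset.mem_filter] at hc hc'
    exact hF.2.2.2 p hp q hq hne c hc.2 hc'.2
  have hne : ∀ p ∈ R, 1 ≤ (g p).card := by
    intro p hp
    obtain ⟨hnil, _, hch⟩ := hF.1 p hp
    obtain ⟨v, hv1, hv2⟩ := hS p hnil hch (hF.2.1 p hp) (hF.2.2.1 p hp)
    refine Finset.card_pos.2 ⟨v, ?_⟩
    simp only [hg, Finset.mem_filter]
    exact ⟨by simpa using hv1, hv2⟩
  have hsub : R.biUnion g ⊆ S := by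
    intro c hc
    obtain ⟨p, hp, hcp⟩ := Finset.mem_biUnion.1 hc
    exact (Finset.mem_filter.1 hcp).1
  have hsum : ∑ p ∈ R, (g p).card = (R.biUnion g).card := (Finset.card_biUnion hdisj).symm
  have hle1 : ∑ p ∈ R, (g p).card ≤ R.card := by
    calc ∑ p ∈ R, (g p).card = (R.biUnion g).card := hsum
    _ ≤ S.card := Finset.card_le_card hsub
    _ ≤ R.card := hcard
  have hone : ∀ p ∈ R, (g p).card = 1 := by
    by_contra hcon
    push_neg at hcon
    obtain ⟨p₀, hp₀, hne1⟩ := hcon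
    have : R.card = ∑ _p ∈ R, 1 := by simp
    have hlt : ∑ _p ∈ R, 1 < ∑ p ∈ R, (g p).card := by
      apply Finset.sum_lt_sum hne
      exact ⟨p₀, hp₀, by have := hne p₀ hp₀; omega⟩
    omega
  constructor
  · intro p hp c hcp hcS c' hcp' hcS'
    have h1 := hone p hp
    have hc : c ∈ g p := by simp only [hg, Finset.mem_filter]; exact ⟨hcS, hcp⟩
    have hc' : c' ∈ g p := by simp only [hg, Finset.mem_filter]; exact ⟨hcS', hcp'⟩
    exact Finset.card_le_one.1 (le_of_eq h1) c hc c' hc'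
  · intro s hs
    have hSeq : R.biUnion g = S := by
      apply Finset.eq_of_subset_of_card_le hsub
      calc S.card ≤ R.card := hcard
      _ = ∑ _p ∈ R, 1 := by simp
      _ ≤ ∑ p ∈ R, (g p).card := Finset.sum_le_sum hne
      _ = (R.biUnion g).card := hsum
    rw [← hSeq] at hs
    obtain ⟨p, hp, hsp⟩ := Finset.mem_biUnion.1 hs
    exact ⟨p, hp, (Finset.mem_filter.1 hsp).2⟩

end FamLemmas

section Trunc
variable {A : α → α → Prop} {Z T : Set α}

theorem trunc_prefix_fam {R : Finset (List α)} (Su : Finset α) (hF : Fam A R Z ↑Su) :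
    ∃ R' : Finset (List α), Fam A R' Z ↑Su ∧ R'.card = R.card ∧
      (∀ p ∈ R', ∀ x ∈ p, x ∈ Su → p.getLast? = some x) := by
  classical
  have key : ∀ p, p ∈ R → ∃ p' : List α,
      p' ≠ [] ∧ p'.Nodup ∧ p'.Chain' A ∧ p'.head? = p.head? ∧
      (∃ s ∈ Su, p'.getLast? = some s) ∧ (∀ x ∈ p', x ∈ p) ∧
      (∀ x ∈ p', x ∈ Su → p'.getLast? = some x) := by
    intro p hp
    obtain ⟨hnil, hnd, hch⟩ := hF.1 p hp
    have hl : p.getLast? = some (p.getLast hnil) := List.getLast?_eq_getLast hnil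
    have hlast : p.getLast hnil ∈ Su := by simpa using hF.2.2.1 p hp _ (by rw [hl]; rfl)
    have hexists : ∃ v ∈ p, v ∈ Su := ⟨p.getLast hnil, mem_of_getLast?_eq hl, hlast⟩
    obtain ⟨l₁, s, l₂, hdec, hsSu, hno⟩ := split_first hexists
    have hpre : (l₁ ++ [s]) <+: p := ⟨l₂, by rw [hdec]; simp⟩
    refine ⟨l₁ ++ [s], by simp, hnd.sublist hpre.sublist, hch.prefix hpre, ?_,
      ⟨s, hsSu, List.getLast?_concat⟩, fun x hx => hpre.subset hx, ?_⟩
    · rw [hdec]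
      exact head?_append_cons l₁ [] l₂ s
    · intro x hx hxSu
      rcases List.mem_append.1 hx with h1 | h2
      · exact absurd hxSu (hno x h1)
      · rw [List.mem_singleton.1 h2]
        exact List.getLast?_concat
  choose f hne hnd hch hhead hlastSu hsub honly using key
  refine ⟨R.attach.image (fun x => f x.1 x.2), ?_, ?_, ?_⟩
  · refine ⟨?_, ?_, ?_, ?_⟩
    · rintro p' hp'
      obtain ⟨⟨p, hp⟩, _, rfl⟩ := Finset.mem_image.1 hp'
      exact ⟨hne p hp, hnd p hp, hch p hp⟩
    · rintro p' hp' z hz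
      obtain ⟨⟨p, hp⟩, _, rfl⟩ := Finset.mem_image.1 hp'
      rw [hhead p hp] at hz
      exact hF.2.1 p hp z hz
    · rintro p' hp' t ht
      obtain ⟨⟨p, hp⟩, _, rfl⟩ := Finset.mem_image.1 hp'
      obtain ⟨s, hsSu, hls⟩ := hlastSu p hp
      rw [hls] at ht
      have : t = s := by simpa using ht.symm
      subst this
      simpa using hsSu
    · rintro p' hp' q' hq' hpq v hv
      obtain ⟨⟨p, hp⟩, _, rfl⟩ := Finset.mem_image.1 hp'
      obtain ⟨⟨q, hq⟩, _, rfl⟩ := Finset.mem_image.1 hq'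
      intro hvq
      have hne' : p ≠ q := by rintro rfl; exact hpq rfl
      exact hF.2.2.2 p hp q hq hne' v (hsub p hp v hv) (hsub q hq v hvq)
  · rw [Finset.card_image_of_injOn, Finset.card_attach]
    intro x hx y hy heq
    by_contra hxy
    have hne' : x.1 ≠ y.1 := fun h => hxy (Subtype.ext h)
    obtain ⟨c, hc⟩ := List.exists_mem_of_ne_nil _ (hne x.1 x.2)
    simp only at heq
    exact hF.2.2.2 x.1 x.2 y.1 y.2 hne' c (hsub x.1 x.2 c hc)
      (hsub y.1 y.2 c (heq ▸ hc))
  · rintro p' hp' x hx hxSu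
    obtain ⟨⟨p, hp⟩, _, rfl⟩ := Finset.mem_image.1 hp'
    exact honly p hp x hx hxSu

theorem trunc_suffix_fam {R : Finset (List α)} (Sv : Finset α) (hF : Fam A R ↑Sv T) :
    ∃ R' : Finset (List α), Fam A R' ↑Sv T ∧ R'.card = R.card ∧
      (∀ p ∈ R', ∀ x ∈ p, x ∈ Sv → p.head? = some x) := by
  classical
  have key : ∀ p, p ∈ R → ∃ p' : List α,
      p' ≠ [] ∧ p'.Nodup ∧ p'.Chain' A ∧ p'.getLast? = p.getLast? ∧
      (∃ s ∈ Sv, p'.head? = some s) ∧ (∀ x ∈ p', x ∈ p) ∧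
      (∀ x ∈ p', x ∈ Sv → p'.head? = some x) := by
    intro p hp
    obtain ⟨hnil, hnd, hch⟩ := hF.1 p hp
    have hh : p.head? = some (p.head hnil) := List.head?_eq_head hnil
    have hhead : p.head hnil ∈ Sv := by simpa using hF.2.1 p hp _ (by rw [hh]; rfl)
    have hexists : ∃ v ∈ p, v ∈ Sv := ⟨p.head hnil, mem_of_head?_eq hh, hhead⟩
    obtain ⟨l₁, s, l₂, hdec, hsSv, hno⟩ := split_last hexists
    have hsuf : (s :: l₂) <:+ p := ⟨l₁, by rw [hdec]⟩
    refine ⟨s :: l₂, by simp, hnd.sublist hsuf.sublist, hch.suffix hsuf, ?_,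
      ⟨s, hsSv, rfl⟩, fun x hx => hsuf.subset hx, ?_⟩
    · rw [hdec, List.getLast?_append_cons]
    · intro x hx hxSv
      rcases List.mem_cons.1 hx with rfl | h2
      · rfl
      · exact absurd hxSv (hno x h2)
  choose f hne hnd hch hlasteq hheadSv hsub honly using key
  refine ⟨R.attach.image (fun x => f x.1 x.2), ?_, ?_, ?_⟩
  · refine ⟨?_, ?_, ?_, ?_⟩
    · rintro p' hp'
      obtain ⟨⟨p, hp⟩, _, rfl⟩ := Finset.mem_image.1 hp'
      exact ⟨hne p hp, hnd p hp, hch p hp⟩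
    · rintro p' hp' z hz
      obtain ⟨⟨p, hp⟩, _, rfl⟩ := Finset.mem_image.1 hp'
      obtain ⟨s, hsSv, hhs⟩ := hheadSv p hp
      rw [hhs] at hz
      have : z = s := by simpa using hz.symm
      subst this
      simpa using hsSv
    · rintro p' hp' t ht
      obtain ⟨⟨p, hp⟩, _, rfl⟩ := Finset.mem_image.1 hp'
      rw [hlasteq p hp] at ht
      exact hF.2.2.1 p hp t ht
    · rintro p' hp' q' hq' hpq v hv
      obtain ⟨⟨p, hp⟩, _, rfl⟩ := Finset.mem_image.1 hp'
      obtain ⟨⟨q, hq⟩, _, rfl⟩ := Finset.mem_image.1 hq'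
      intro hvq
      have hne' : p ≠ q := by rintro rfl; exact hpq rfl
      exact hF.2.2.2 p hp q hq hne' v (hsub p hp v hv) (hsub q hq v hvq)
  · rw [Finset.card_image_of_injOn, Finset.card_attach]
    intro x hx y hy heq
    by_contra hxy
    have hne' : x.1 ≠ y.1 := fun h => hxy (Subtype.ext h)
    obtain ⟨c, hc⟩ := List.exists_mem_of_ne_nil _ (hne x.1 x.2)
    simp only at heq
    exact hF.2.2.2 x.1 x.2 y.1 y.2 hne' c (hsub x.1 x.2 c hc)
      (hsub y.1 y.2 c (heq ▸ hc))
  · rintro p' hp' x hx hxSv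
    obtain ⟨⟨p, hp⟩, _, rfl⟩ := Finset.mem_image.1 hp'
    exact honly p hp x hx hxSv

end Trunc

theorem menger_nil [Fintype α] (Z T : Set α) :
    ∃ (S : Finset α) (R : Finset (List α)), Sep (R2 (∅ : Finset (α × α))) Z T ↑S ∧
      Fam (R2 (∅ : Finset (α × α))) R Z T ∧ S.card ≤ R.card := by
  classical
  set S := (Z ∩ T).toFinite.toFinset with hSdef
  refine ⟨S, S.image (fun v => [v]), ?_, ?_, ?_⟩
  · intro w hw hc hh ht
    cases w with
    | nil => exact absurd rfl hw
    | cons x l =>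
      cases l with
      | nil =>
        refine ⟨x, ?_, by simp⟩
        have : x ∈ Z ∩ T := ⟨hh x rfl, ht x rfl⟩
        simpa [hSdef] using this
      | cons y l' =>
        rw [List.Chain', List.isChain_cons_cons] at hc
        exact absurd hc.1 (by simp [R2])
  · refine ⟨?_, ?_, ?_, ?_⟩
    · rintro p hp
      obtain ⟨v, hv, rfl⟩ := Finset.mem_image.1 hp
      exact ⟨by simp, by simp, by simp [List.Chain']⟩
    · rintro p hp z hz
      obtain ⟨v, hv, rfl⟩ := Finset.mem_image.1 hp
      have : z = v := by simpa using hz.symm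
      subst this
      have : z ∈ Z ∩ T := by simpa [hSdef] using hv
      exact this.1
    · rintro p hp t ht
      obtain ⟨v, hv, rfl⟩ := Finset.mem_image.1 hp
      have : t = v := by simpa using ht.symm
      subst this
      have : t ∈ Z ∩ T := by simpa [hSdef] using hv
      exact this.2
    · rintro p hp q hq hpq v hv hvq
      obtain ⟨a, ha, rfl⟩ := Finset.mem_image.1 hp
      obtain ⟨b, hb, rfl⟩ := Finset.mem_image.1 hq
      have hva : v = a := by simpa using hv
      have hvb : v = b := by simpa using hvq
      exact hpq (by rw [← hva, ← hvb])
  · rw [Finset.card_image_of_injective _ (fun a b h => by simpa using h)]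

theorem menger [Fintype α] : ∀ (n : ℕ) (F : Finset (α × α)), F.card ≤ n → ∀ (Z T : Set α),
    ∃ (S : Finset α) (R : Finset (List α)),
      Sep (R2 F) Z T ↑S ∧ Fam (R2 F) R Z T ∧ S.card ≤ R.card := by
  classical
  intro n
  induction n with
  | zero =>
    intro F hF Z T
    have : F = ∅ := Finset.card_eq_zero.1 (Nat.le_zero.1 hF)
    subst this
    exact menger_nil Z T
  | succ n ih =>
    intro F hF Z T
    rcases F.eq_empty_or_nonempty with rfl | ⟨a, ha⟩
    · obtain ⟨S, R, h1, h2, h3⟩ := menger_nil (α := α) Z T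
      exact ⟨S, R, h1, h2, h3⟩
    obtain ⟨u, v⟩ := a
    set F' := F.erase (u, v) with hF'def
    have hF'card : F'.card ≤ n := by
      have h1 : F'.card = F.card - 1 := Finset.card_erase_of_mem ha
      have h2 : 0 < F.card := Finset.card_pos.2 ⟨(u,v), ha⟩
      omega
    have hsubrel : ∀ x y, R2 F' x y → R2 F x y := fun x y h => Finset.mem_of_mem_erase h
    have dich : ∀ w : List α, w.Chain' (R2 F) →
        w.Chain' (R2 F') ∨ ∃ l₁ l₂, w = l₁ ++ u :: v :: l₂ := by
      intro w hc
      rcases chain'_sub_or_uses (u := u) (v := v) hc with h | h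
      · left
        refine h.imp ?_
        rintro x y ⟨hxy, hne⟩
        have : (x, y) ∈ F.erase (u, v) :=
          Finset.mem_erase.2 ⟨by simpa [Prod.ext_iff] using hne, hxy⟩
        exact this
      · right; exact h
    obtain ⟨C, R₀, sepC, famC, cardC⟩ := ih F' hF'card Z T
    by_cases hCgood : Sep (R2 F) Z T ↑C
    · exact ⟨C, R₀, hCgood, fam_mono_rel famC hsubrel, cardC⟩
    by_cases hSex : ∃ S'' : Finset α, S''.card ≤ R₀.card ∧ Sep (R2 F) Z T ↑S''
    · obtain ⟨S'', hcard'', hsep''⟩ := hSex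
      exact ⟨S'', R₀, hsep'', fam_mono_rel famC hsubrel, hcard''⟩
    push_neg at hSex
    have key : ∀ S'' : Finset α, Sep (R2 F) Z T ↑S'' → R₀.card + 1 ≤ S''.card := by
      intro S'' hsep''
      by_contra hcon
      push_neg at hcon
      exact absurd hsep'' (hSex S'' (by omega))
    have huC : u ∉ C := by
      intro huC
      apply hCgood
      intro w hw hc hh ht
      rcases dich w hc with hc' | ⟨l₁, l₂, rfl⟩
      · exact sepC w hw hc' hh ht
      · exact ⟨u, by simpa using huC, by simp⟩
    have hvC : v ∉ C := by
      intro hvC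
      apply hCgood
      intro w hw hc hh ht
      rcases dich w hc with hc' | ⟨l₁, l₂, rfl⟩
      · exact sepC w hw hc' hh ht
      · exact ⟨v, by simpa using hvC, by simp⟩
    set Su := insert u C with hSudef
    set Sv := insert v C with hSvdef
    have hCcard : C.card = R₀.card := le_antisymm ?hCle1 ?hCle2
    case hCle1 => exact cardC
    case hCle2 => exact fam_card_le_sep famC C sepC
    have hSucard : Su.card = R₀.card + 1 := by
      rw [hSudef, Finset.card_insert_of_notMem huC, hCcard]
    have hSvcard : Sv.card = R₀.card + 1 := by
      rw [hSvdef, Finset.card_insert_of_notMem hvC, hCcard]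
    have sepSu : Sep (R2 F) Z T ↑Su := by
      intro w hw hc hh ht
      rcases dich w hc with hc' | ⟨l₁, l₂, rfl⟩
      · obtain ⟨c, hc1, hc2⟩ := sepC w hw hc' hh ht
        refine ⟨c, ?_, hc2⟩
        have : c ∈ C := by simpa using hc1
        simp [hSudef, this]
      · exact ⟨u, by simp [hSudef], by simp⟩
    have sepSv : Sep (R2 F) Z T ↑Sv := by
      intro w hw hc hh ht
      rcases dich w hc with hc' | ⟨l₁, l₂, rfl⟩
      · obtain ⟨c, hc1, hc2⟩ := sepC w hw hc' hh ht
        refine ⟨c, ?_, hc2⟩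
        have : c ∈ C := by simpa using hc1
        simp [hSvdef, this]
      · exact ⟨v, by simp [hSvdef], by simp⟩
    -- every (Z, Su) separator in F' is big
    have hcut1 : ∀ S'' : Finset α, Sep (R2 F') Z ↑Su ↑S'' → R₀.card + 1 ≤ S''.card := by
      intro S'' hsep''
      apply key
      intro w hw hc hh ht
      obtain ⟨s, hsSu, hsw⟩ := sepSu w hw hc hh ht
      have hsSu' : s ∈ Su := by simpa using hsSu
      obtain ⟨l₁, s', l₂, hdec, hs'Su, hno⟩ :=
        split_first (P := fun c => c ∈ Su) ⟨s, hsw, hsSu'⟩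
      have hpre : (l₁ ++ [s']) <+: w := ⟨l₂, by rw [hdec]; simp⟩
      have hchw' : (l₁ ++ [s']).Chain' (R2 F) := hc.prefix hpre
      have hchw'' : (l₁ ++ [s']).Chain' (R2 F') := by
        rcases dich _ hchw' with h | ⟨m₁, m₂, hm⟩
        · exact h
        · exfalso
          have hu : u ∈ l₁ := by
            have h1 : u ∈ (l₁ ++ [s']).dropLast := by
              rw [hm]; exact mem_dropLast_uses m₁ m₂ u v
            simpa using h1
          exact hno u hu (by simp [hSudef])
      have hhgoal : ∀ z ∈ (l₁ ++ [s']).head?, z ∈ Z := by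
        intro z hz
        apply hh
        rw [hdec]
        rw [show (l₁ ++ [s']).head? = (l₁ ++ s' :: l₂).head? from head?_append_cons l₁ [] l₂ s'] at hz
        exact hz
      have htgoal : ∀ t' ∈ (l₁ ++ [s']).getLast?, t' ∈ (↑Su : Set α) := by
        intro t' ht'
        rw [List.getLast?_concat] at ht'
        have : t' = s' := by simpa using ht'.symm
        subst this
        simpa using hs'Su
      obtain ⟨c, hcS'', hcw'⟩ := hsep'' (l₁ ++ [s']) (by simp) hchw'' hhgoal htgoal
      exact ⟨c, hcS'', hpre.subset hcw'⟩
    have hcut2 : ∀ S'' : Finset α, Sep (R2 F') ↑Sv T ↑S'' → R₀.card + 1 ≤ S''.card := by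
      intro S'' hsep''
      apply key
      intro w hw hc hh ht
      obtain ⟨s, hsSv, hsw⟩ := sepSv w hw hc hh ht
      have hsSv' : s ∈ Sv := by simpa using hsSv
      obtain ⟨l₁, s', l₂, hdec, hs'Sv, hno⟩ :=
        split_last (P := fun c => c ∈ Sv) ⟨s, hsw, hsSv'⟩
      have hsuf : (s' :: l₂) <:+ w := ⟨l₁, by rw [hdec]⟩
      have hchw' : (s' :: l₂).Chain' (R2 F) := hc.suffix hsuf
      have hchw'' : (s' :: l₂).Chain' (R2 F') := by
        rcases dich _ hchw' with h | ⟨m₁, m₂, hm⟩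
        · exact h
        · exfalso
          have hv : v ∈ l₂ := by
            have h1 : v ∈ (s' :: l₂).tail := by
              rw [hm]; exact mem_tail_uses m₁ m₂ u v
            simpa using h1
          exact hno v hv (by simp [hSvdef])
      have hhgoal : ∀ z ∈ (s' :: l₂).head?, z ∈ (↑Sv : Set α) := by
        intro z hz
        have : z = s' := by simpa using hz.symm
        subst this
        simpa using hs'Sv
      have htgoal : ∀ t' ∈ (s' :: l₂).getLast?, t' ∈ T := by
        intro t' ht'
        apply ht
        rw [hdec, List.getLast?_append_cons]
        exact ht'
      obtain ⟨c, hcS'', hcw'⟩ := hsep'' (s' :: l₂) (by simp) hchw'' hhgoal htgoal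
      exact ⟨c, hcS'', hsuf.subset hcw'⟩
    -- first half
    obtain ⟨S₁, R₁, sep₁, fam₁, card₁⟩ := ih F' hF'card Z ↑Su
    have hR₁ : R₁.card = R₀.card + 1 := by
      have h1 := hcut1 S₁ sep₁
      have h2 : R₁.card ≤ Su.card := fam_card_le_finsetTarget fam₁
      omega
    obtain ⟨P₁, famP₁, cardP₁, honly₁⟩ := trunc_prefix_fam Su fam₁
    have hP₁card : P₁.card = R₀.card + 1 := by rw [cardP₁, hR₁]
    -- second half
    obtain ⟨S₂, R₂, sep₂, fam₂, card₂⟩ := ih F' hF'card ↑Sv T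
    have hR₂ : R₂.card = R₀.card + 1 := by
      have h1 := hcut2 S₂ sep₂
      have h2 : R₂.card ≤ Sv.card := fam_card_le_finsetSource fam₂
      omega
    obtain ⟨P₂, famP₂, cardP₂, honly₂⟩ := trunc_suffix_fam Sv fam₂
    have hP₂card : P₂.card = R₀.card + 1 := by rw [cardP₂, hR₂]
    have hontoP₂ : ∀ s ∈ Sv, ∃ q ∈ P₂, q.head? = some s :=
      fam_head_onto famP₂ (by omega)
    -- cross disjointness
    have cross : ∀ p ∈ P₁, ∀ q ∈ P₂, ∀ x, x ∈ p → x ∈ q →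
        x ∈ C ∧ p.getLast? = some x ∧ q.head? = some x := by
      intro p hp q hq x hxp hxq
      have hxC : x ∈ C := by
        by_contra hxC
        obtain ⟨p₁, p₂, hpdec⟩ := List.append_of_mem hxp
        obtain ⟨q₁, q₂, hqdec⟩ := List.append_of_mem hxq
        have hchp := (famP₁.1 p hp).2.2
        have hchq := (famP₂.1 q hq).2.2
        rw [hpdec] at hchp
        rw [hqdec] at hchq
        have hch : (p₁ ++ x :: q₂).Chain' (R2 F') := chain'_glue hchp hchq
        have hhgoal : ∀ z ∈ (p₁ ++ x :: q₂).head?, z ∈ Z := by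
          intro z hz
          rw [show (p₁ ++ x :: q₂).head? = (p₁ ++ x :: p₂).head? from
            head?_append_cons p₁ q₂ p₂ x, ← hpdec] at hz
          exact famP₁.2.1 p hp z hz
        have htgoal : ∀ t' ∈ (p₁ ++ x :: q₂).getLast?, t' ∈ T := by
          intro t' ht'
          rw [List.getLast?_append_cons,
            show (x :: q₂).getLast? = (q₁ ++ x :: q₂).getLast? from
              (List.getLast?_append_cons q₁ x q₂).symm, ← hqdec] at ht'
          exact famP₂.2.2.1 q hq t' ht'
        obtain ⟨c, hcC, hch2⟩ := sepC (p₁ ++ x :: q₂) (by simp) hch hhgoal htgoal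
        have hcC' : c ∈ C := by simpa using hcC
        rcases List.mem_append.1 hch2 with hc1 | hc2
        · -- c ∈ p₁
          have hcp : c ∈ p := by rw [hpdec]; exact List.mem_append_left _ hc1
          have hlast := honly₁ p hp c hcp (by simp [hSudef, hcC'])
          have hnd := (famP₁.1 p hp).2.1
          rw [hpdec] at hnd hlast
          have hc2' : c ∈ x :: p₂ :=
            mem_of_getLast?_eq (by rw [← List.getLast?_append_cons]; exact hlast)
          exact (List.disjoint_of_nodup_append hnd) hc1 hc2'
        · rcases List.mem_cons.1 hc2 with rfl | hc3
          · exact hxC hcC'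
          · -- c ∈ q₂
            have hcq : c ∈ q := by
              rw [hqdec]
              exact List.mem_append_right _ (List.mem_cons_of_mem _ hc3)
            have hhead := honly₂ q hq c hcq (by simp [hSvdef, hcC'])
            have hnd := (famP₂.1 q hq).2.1
            rw [hqdec] at hnd hhead
            have hnd' : ((q₁ ++ [x]) ++ q₂).Nodup := by simpa using hnd
            have hc1' : c ∈ q₁ ++ [x] := by
              cases q₁ with
              | nil =>
                simp only [List.nil_append] at hhead ⊢
                simp at hhead
                simp [hhead]
              | cons b t =>
                simp only [List.cons_append] at hhead ⊢
                simp at hhead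
                simp [hhead]
            exact (List.disjoint_of_nodup_append hnd') hc1' hc3
      exact ⟨hxC, honly₁ p hp x hxp (by simp [hSudef, hxC]),
        honly₂ q hq x hxq (by simp [hSvdef, hxC])⟩
    -- gluing
    have hP₁ne : P₁.Nonempty := Finset.card_pos.1 (by omega)
    obtain ⟨pp, hpp⟩ := hP₁ne
    haveI : Inhabited α := ⟨pp.head (famP₁.1 pp hpp).1⟩
    set lastv : List α → α := fun p => p.getLast?.getD default with hlastv
    have hlastv_spec : ∀ p ∈ P₁, p.getLast? = some (lastv p) := by
      intro p hp
      have hne := (famP₁.1 p hp).1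
      have h := List.getLast?_eq_getLast hne
      rw [hlastv]
      simp only [h, Option.getD_some]
    have hlastv_mem : ∀ p ∈ P₁, lastv p ∈ p :=
      fun p hp => mem_of_getLast?_eq (hlastv_spec p hp)
    have hlastvSu : ∀ p ∈ P₁, lastv p ∈ Su := by
      intro p hp
      have := famP₁.2.2.1 p hp _ (by rw [hlastv_spec p hp]; rfl)
      simpa using this
    have hqsel : ∀ p, p ∈ P₁ → ∃ q ∈ P₂, q.head? = some (if lastv p ∈ C then lastv p else v) := by
      intro p hp
      apply hontoP₂
      by_cases h : lastv p ∈ C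
      · rw [if_pos h]; simp [hSvdef, h]
      · rw [if_neg h]; simp [hSvdef]
    choose qf hqf₁ hqf₂ using hqsel
    have hqne : ∀ p (hp : p ∈ P₁), qf p hp ≠ [] := fun p hp => (famP₂.1 _ (hqf₁ p hp)).1
    -- the glued path
    set glue : (x : List α) → x ∈ P₁ → List α := fun p hp =>
      if lastv p ∈ C then p ++ (qf p hp).tail else p ++ qf p hp with hglue
    have hglue_sub : ∀ p (hp : p ∈ P₁) x, x ∈ glue p hp → x ∈ p ∨ x ∈ qf p hp := by
      intro p hp x hx
      simp only [hglue] at hx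
      by_cases h : lastv p ∈ C
      · rw [if_pos h] at hx
        rcases List.mem_append.1 hx with h1 | h2
        · exact Or.inl h1
        · exact Or.inr (List.mem_of_mem_tail h2)
      · rw [if_neg h] at hx
        exact List.mem_append.1 hx
    have hglue_lastu : ∀ p (hp : p ∈ P₁), lastv p ∉ C → lastv p = u := by
      intro p hp h
      have := hlastvSu p hp
      rw [hSudef, Finset.mem_insert] at this
      tauto
    have hglue_ne : ∀ p (hp : p ∈ P₁), glue p hp ≠ [] := by
      intro p hp
      simp only [hglue]
      have hne := (famP₁.1 p hp).1
      by_cases h : lastv p ∈ C <;> simp [h, hne]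
    have hglue_head : ∀ p (hp : p ∈ P₁), (glue p hp).head? = p.head? := by
      intro p hp
      have hne := (famP₁.1 p hp).1
      simp only [hglue]
      by_cases h : lastv p ∈ C <;> simp [h, head?_append_left hne]
    have hglue_last : ∀ p (hp : p ∈ P₁), ∀ t ∈ (glue p hp).getLast?, t ∈ T := by
      intro p hp t ht
      simp only [hglue] at ht
      by_cases h : lastv p ∈ C
      · rw [if_pos h] at ht
        have hq := eq_cons_of_head?
          (show (qf p hp).head? = some (lastv p) by rw [hqf₂ p hp, if_pos h])
        rcases List.eq_nil_or_concat (qf p hp).tail with htail | ⟨l', b, htail⟩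
        · rw [htail, List.append_nil] at ht
          have hteq : t = lastv p := by
            rw [hlastv_spec p hp] at ht
            simpa using ht.symm
          rw [hteq]
          apply famP₂.2.2.1 _ (hqf₁ p hp) (lastv p)
          rw [hq, htail]
          rfl
        · rw [List.concat_eq_append] at htail
          rw [htail, ← List.append_assoc, List.getLast?_concat] at ht
          have hteq : t = b := by simpa using ht.symm
          rw [hteq]
          apply famP₂.2.2.1 _ (hqf₁ p hp) b
          rw [hq, htail, show lastv p :: (l' ++ [b]) = (lastv p :: l') ++ [b] from rfl,
            List.getLast?_concat]
          rfl
      · rw [if_neg h, List.getLast?_append_of_ne_nil _ (hqne p hp)] at ht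
        exact famP₂.2.2.1 _ (hqf₁ p hp) t ht
    have hglue_chain : ∀ p (hp : p ∈ P₁), (glue p hp).Chain' (R2 F) := by
      intro p hp
      have hchp : p.Chain' (R2 F') := (famP₁.1 p hp).2.2
      have hchq : (qf p hp).Chain' (R2 F') := (famP₂.1 _ (hqf₁ p hp)).2.2
      simp only [hglue]
      by_cases h : lastv p ∈ C
      · rw [if_pos h]
        have hpdec : p.dropLast ++ lastv p :: [] = p :=
          List.dropLast_append_getLast? (lastv p) (by rw [hlastv_spec p hp]; rfl)
        have hqdec : [] ++ lastv p :: (qf p hp).tail = qf p hp := by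
          rw [List.nil_append]
          exact (eq_cons_of_head? (by rw [hqf₂ p hp, if_pos h])).symm
        have h₁ : (p.dropLast ++ lastv p :: []).Chain' (R2 F') := by rw [hpdec]; exact hchp
        have h₂ : ([] ++ lastv p :: (qf p hp).tail).Chain' (R2 F') := by rw [hqdec]; exact hchq
        have hres := (chain'_glue h₁ h₂).imp hsubrel
        have heq : p ++ (qf p hp).tail = p.dropLast ++ lastv p :: (qf p hp).tail := by
          calc p ++ (qf p hp).tail = (p.dropLast ++ [lastv p]) ++ (qf p hp).tail := by rw [hpdec]
          _ = p.dropLast ++ lastv p :: (qf p hp).tail := by simp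
        rw [heq]
        exact hres
      · rw [if_neg h]
        refine List.isChain_append.2 ⟨hchp.imp hsubrel, hchq.imp hsubrel, ?_⟩
        intro a' ha' b' hb'
        have hau : a' = u := by
          rw [hlastv_spec p hp] at ha'
          have : a' = lastv p := by simpa using ha'.symm
          rw [this, hglue_lastu p hp h]
        have hbv : b' = v := by
          rw [hqf₂ p hp, if_neg h] at hb'
          simpa using hb'.symm
        rw [hau, hbv]
        exact ha
    have hglue_nodup : ∀ p (hp : p ∈ P₁), (glue p hp).Nodup := by
      intro p hp
      have hndp := (famP₁.1 p hp).2.1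
      have hndq := (famP₂.1 _ (hqf₁ p hp)).2.1
      simp only [hglue]
      by_cases h : lastv p ∈ C
      · rw [if_pos h]
        refine hndp.append (hndq.sublist (List.tail_sublist _)) ?_
        intro x hxp hxt
        have hxq : x ∈ qf p hp := List.mem_of_mem_tail hxt
        obtain ⟨_, _, hhead⟩ := cross p hp _ (hqf₁ p hp) x hxp hxq
        exact not_mem_tail_of_nodup_of_head? hndq hhead hxt
      · rw [if_neg h]
        refine hndp.append hndq ?_
        intro x hxp hxq
        obtain ⟨hxC, hlast, _⟩ := cross p hp _ (hqf₁ p hp) x hxp hxq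
        have : x = lastv p := by
          rw [hlastv_spec p hp] at hlast
          simpa using hlast.symm
        rw [this] at hxC
        exact h hxC
    -- pairwise disjointness of glued paths
    have hglue_disj : ∀ p (hp : p ∈ P₁) p' (hp' : p' ∈ P₁), p ≠ p' →
        ∀ x, x ∈ glue p hp → x ∉ glue p' hp' := by
      intro p hp p' hp' hne x hx hx'
      have hdx := hglue_sub p hp x hx
      have hdx' := hglue_sub p' hp' x hx'
      have hqq' : qf p hp ≠ qf p' hp' := by
        intro heq
        have h1 := hqf₂ p hp
        have h2 := hqf₂ p' hp'
        rw [heq, h2] at h1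
        have h1' : (if lastv p' ∈ C then lastv p' else v) = (if lastv p ∈ C then lastv p else v) := by
          simpa using h1
        by_cases hc1 : lastv p ∈ C <;> by_cases hc2 : lastv p' ∈ C
        · rw [if_pos hc1, if_pos hc2] at h1'
          have hl := hlastv_mem p hp
          have hl' := hlastv_mem p' hp'
          rw [h1'] at hl'
          exact famP₁.2.2.2 p hp p' hp' hne _ hl hl' 
        · rw [if_pos hc1, if_neg hc2] at h1'
          rw [← h1'] at hc1
          exact hvC hc1
        · rw [if_neg hc1, if_pos hc2] at h1'
          rw [h1'] at hc2
          exact hvC hc2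
        · -- both last = u, so u ∈ p ∩ p'
          have e1 := hglue_lastu p hp hc1
          have e2 := hglue_lastu p' hp' hc2
          have hl := hlastv_mem p hp
          have hl' := hlastv_mem p' hp'
          rw [e1] at hl
          rw [e2] at hl'
          exact famP₁.2.2.2 p hp p' hp' hne _ hl hl'
      rcases hdx with hxp | hxq
      · rcases hdx' with hxp' | hxq'
        · exact famP₁.2.2.2 p hp p' hp' hne x hxp hxp'
        · -- x ∈ p and x ∈ qf p' : cross gives head? (qf p') = some x and getLast? p = some x... 
          obtain ⟨hxC, hlast, hhead⟩ := cross p hp _ (hqf₁ p' hp') x hxp hxq'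
          -- head of qf p' is the selector of p'
          have hsel := hqf₂ p' hp'
          rw [hhead] at hsel
          have hxsel : x = (if lastv p' ∈ C then lastv p' else v) := by simpa using hsel
          by_cases hc2 : lastv p' ∈ C
          · rw [if_pos hc2] at hxsel
            have hl' := hlastv_mem p' hp'
            rw [← hxsel] at hl'
            exact famP₁.2.2.2 p hp p' hp' hne x hxp hl'
          · rw [if_neg hc2] at hxsel
            rw [hxsel] at hxC
            exact hvC hxC
      · rcases hdx' with hxp' | hxq'
        · obtain ⟨hxC, hlast, hhead⟩ := cross p' hp' _ (hqf₁ p hp) x hxp' hxq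
          have hsel := hqf₂ p hp
          rw [hhead] at hsel
          have hxsel : x = (if lastv p ∈ C then lastv p else v) := by simpa using hsel
          by_cases hc1 : lastv p ∈ C
          · rw [if_pos hc1] at hxsel
            have hl := hlastv_mem p hp
            rw [← hxsel] at hl
            exact famP₁.2.2.2 p' hp' p hp (fun hh => hne hh.symm) x hxp' hl
          · rw [if_neg hc1] at hxsel
            rw [hxsel] at hxC
            exact hvC hxC
        · exact famP₂.2.2.2 _ (hqf₁ p hp) _ (hqf₁ p' hp') hqq' x hxq hxq'
    -- assemble the glued family
    set G : Finset (List α) := P₁.attach.image (fun x => glue x.1 x.2) with hGdef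
    have hGcard : G.card = P₁.card := by
      rw [hGdef, Finset.card_image_of_injOn, Finset.card_attach]
      intro x hx y hy heq
      simp only at heq
      by_contra hxy
      have hne' : x.1 ≠ y.1 := fun h => hxy (Subtype.ext h)
      obtain ⟨c, hc⟩ := List.exists_mem_of_ne_nil _ (hglue_ne x.1 x.2)
      exact hglue_disj x.1 x.2 y.1 y.2 hne' c hc (heq ▸ hc)
    have famG : Fam (R2 F) G Z T := by
      refine ⟨?_, ?_, ?_, ?_⟩
      · rintro g hg
        obtain ⟨⟨p, hp⟩, _, rfl⟩ := Finset.mem_image.1 hg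
        exact ⟨hglue_ne p hp, hglue_nodup p hp, hglue_chain p hp⟩
      · rintro g hg z hz
        obtain ⟨⟨p, hp⟩, _, rfl⟩ := Finset.mem_image.1 hg
        rw [hglue_head p hp] at hz
        exact famP₁.2.1 p hp z hz
      · rintro g hg t ht
        obtain ⟨⟨p, hp⟩, _, rfl⟩ := Finset.mem_image.1 hg
        exact hglue_last p hp t ht
      · rintro g hg g' hg' hgg' x hx
        obtain ⟨⟨p, hp⟩, _, rfl⟩ := Finset.mem_image.1 hg
        obtain ⟨⟨p', hp'⟩, _, rfl⟩ := Finset.mem_image.1 hg'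
        have hne' : p ≠ p' := by
          rintro rfl
          exact hgg' rfl
        exact hglue_disj p hp p' hp' hne' x hx
    exact ⟨Su, G, sepSu, famG, by omega⟩

theorem hybrid_contra [DecidableEq α] {A : α → α → Prop} {X' T : Set α} {S' : Finset α}
    (sepb : Sep A X' T ↑S')
    {p : List α} (hch : p.Chain' A) (hhp : ∀ z ∈ p.head?, z ∈ X')
    {b : α} (hb : ∀ c ∈ p, c ∈ S' → c = b)
    {s : α} (hsp : s ∈ p) (hidx : p.idxOf s < p.idxOf b)
    {w w₁ w₂ : List α} (hwdec : w = w₁ ++ s :: w₂) (hcw : w.Chain' A)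
    (htw : ∀ t ∈ w.getLast?, t ∈ T) (hclean : ∀ c ∈ w₂, c ∉ S') : False := by
  set i := p.idxOf s with hi
  have hilt : i < p.length := List.idxOf_lt_length_iff.2 hsp
  have htake : p.take (i + 1) = p.take i ++ [s] := by
    rw [List.take_succ, List.getElem?_eq_getElem hilt]
    rw [show p[i] = s from List.getElem_idxOf hilt]
    rfl
  have hcw' : ((w₁ ++ [s]) ++ w₂).Chain' A := by
    have : w₁ ++ s :: w₂ = (w₁ ++ [s]) ++ w₂ := by simp
    rw [← this, ← hwdec]
    exact hcw
  have hlink := (List.isChain_append.1 hcw').2.2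
  set h := p.take (i + 1) ++ w₂ with hh
  have hchh : h.Chain' A := by
    refine List.isChain_append.2 ⟨hch.prefix (List.take_prefix _ _), ?_, ?_⟩
    · exact hcw.suffix ⟨w₁ ++ [s], by rw [hwdec]; simp⟩
    · intro x hx y hy
      rw [htake, List.getLast?_concat] at hx
      have : x = s := by simpa using hx.symm
      subst this
      exact hlink x (by rw [List.getLast?_concat]; exact hx) y hy
  have hsne : p.take (i + 1) ≠ [] := by
    apply List.ne_nil_of_mem (a := s)
    rw [htake]
    exact List.mem_append_right _ (by simp)
  have hhne : h ≠ [] := by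
    rw [hh]
    intro hcon
    exact hsne (List.append_eq_nil_iff.1 hcon).1
  have hhead : h.head? = p.head? := by
    rw [hh, head?_append_left hsne]
    cases p with
    | nil => simp at hsp
    | cons a t => rw [List.take_succ_cons]; rfl
  have hlastT : ∀ t ∈ h.getLast?, t ∈ T := by
    intro t ht
    cases w₂ with
    | nil =>
      rw [hh, List.append_nil, htake, List.getLast?_concat] at ht
      have : t = s := by simpa using ht.symm
      subst this
      apply htw
      rw [hwdec, List.getLast?_append_cons]
      rfl
    | cons d w₂' =>
      rw [hh, List.getLast?_append_of_ne_nil _ (by simp)] at ht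
      apply htw
      rw [hwdec, List.getLast?_append_cons]
      exact ht
  obtain ⟨c, hcS, hch2⟩ := sepb h hhne hchh (by rw [hhead]; exact hhp) hlastT
  have hcS' : c ∈ S' := by simpa using hcS
  rcases List.mem_append.1 hch2 with hc1 | hc2
  · have hcp : c ∈ p := List.take_subset _ _ hc1
    have hcb : c = b := hb c hcp hcS'
    rw [hcb] at hc1
    have := indexOf_lt_of_mem_take hc1
    omega
  · exact hclean c hc2 hcS'

section Outer
variable [Fintype α] (A : α → α → Prop)

noncomputable def arcFinset : Finset (α × α) :=
  (setOf fun q : α × α => A q.1 q.2).toFinite.toFinset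

theorem R2_arcFinset : R2 (arcFinset A) = A := by
  funext x y
  simp only [R2, arcFinset, Set.Finite.mem_toFinset, Set.mem_setOf_eq]
  rfl

theorem menger' (Z T : Set α) :
    ∃ (S : Finset α) (R : Finset (List α)),
      Sep A Z T ↑S ∧ Fam A R Z T ∧ S.card ≤ R.card := by
  obtain ⟨S, R, h1, h2, h3⟩ :=
    menger (arcFinset A).card (arcFinset A) le_rfl Z T
  rw [R2_arcFinset] at h1 h2
  exact ⟨S, R, h1, h2, h3⟩

variable {A}

theorem routing_to_fam {R : Set (List α)} {X T : Set α} (h : IsRouting A R X T) :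
    ∃ P : Finset (List α), Fam A P X T ∧ P.card = X.ncard ∧
      ∀ x ∈ X, ∃ p ∈ P, p.head? = some x := by
  classical
  rcases X.eq_empty_or_nonempty with rfl | ⟨x₀, hx₀⟩
  · refine ⟨∅, ⟨by simp, by simp, by simp, by simp⟩, by simp, by simp⟩
  haveI : Inhabited α := ⟨x₀⟩
  have hfin : {p ∈ R | ∃ x ∈ X, p.head? = some x}.Finite := by
    apply Set.Finite.subset (List.finite_length_le α (Fintype.card α))
    intro p hp
    exact (h.1 p hp.1).2.1.length_le_card
  set P := hfin.toFinset with hP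
  have hmem : ∀ p, p ∈ P ↔ p ∈ R ∧ ∃ x ∈ X, p.head? = some x := by
    intro p
    rw [hP, Set.Finite.mem_toFinset]
    rfl
  have hfam : Fam A P X T := by
    refine ⟨?_, ?_, ?_, ?_⟩
    · intro p hp
      exact h.1 p ((hmem p).1 hp).1
    · intro p hp z hz
      obtain ⟨x, hxX, hx⟩ := ((hmem p).1 hp).2
      rw [hx] at hz
      have : z = x := by simpa using hz.symm
      rw [this]
      exact hxX
    · intro p hp t ht
      obtain ⟨y, hyT, hy⟩ := h.2.2.1 p ((hmem p).1 hp).1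
      rw [hy] at ht
      have : t = y := by simpa using ht.symm
      rw [this]
      exact hyT
    · intro p hp q hq hne
      exact h.2.2.2 p ((hmem p).1 hp).1 q ((hmem q).1 hq).1 hne
  have honto : ∀ x ∈ X, ∃ p ∈ P, p.head? = some x := by
    intro x hx
    obtain ⟨p, hpR, hph⟩ := h.2.1 x hx
    exact ⟨p, (hmem p).2 ⟨hpR, x, hx, hph⟩, hph⟩
  refine ⟨P, hfam, ?_, honto⟩
  -- cardinality
  set f : List α → α := fun p => p.head?.getD default with hfdef
  have hfp : ∀ p, p ∈ P → f p ∈ p := by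
    intro p hp
    have hne := (hfam.1 p hp).1
    cases p with
    | nil => exact absurd rfl hne
    | cons a t => simp [hfdef]
  have hXfin : X.Finite := Set.toFinite X
  have himg : P.image f = hXfin.toFinset := by
    apply Finset.Subset.antisymm
    · intro x hx
      obtain ⟨p, hp, rfl⟩ := Finset.mem_image.1 hx
      have hne := (hfam.1 p hp).1
      rw [Set.Finite.mem_toFinset]
      have := hfam.2.1 p hp
      cases p with
      | nil => exact absurd rfl hne
      | cons a t => simpa [hfdef] using this a rfl
    · intro x hx
      rw [Set.Finite.mem_toFinset] at hx
      obtain ⟨p, hp, hph⟩ := honto x hx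
      refine Finset.mem_image.2 ⟨p, hp, ?_⟩
      rw [hfdef]
      simp [hph]
  have hcard : P.card = (P.image f).card :=
    (Finset.card_image_of_injOn (fam_injOn hfam.2.2.2 f hfp)).symm
  rw [hcard, himg, Set.ncard_eq_toFinset_card X hXfin]

theorem exists_sep_of_not_routing {Z T : Set α}
    (h : ¬ ∃ R : Set (List α), IsRouting A R Z T) :
    ∃ S : Finset α, Sep A Z T ↑S ∧ S.card < Z.ncard := by
  classical
  obtain ⟨S, R, hS, hF, hc⟩ := menger' A Z T
  by_cases hlt : S.card < Z.ncard
  · exact ⟨S, hS, hlt⟩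
  exfalso
  apply h
  push_neg at hlt
  have hZfin : Z.Finite := Set.toFinite Z
  have hcoe : (↑hZfin.toFinset : Set α) = Z := Set.Finite.coe_toFinset _
  have famZ : Fam A R ↑hZfin.toFinset T := by rwa [hcoe]
  have h1 : R.card ≤ hZfin.toFinset.card := fam_card_le_finsetSource famZ
  have h2 : hZfin.toFinset.card = Z.ncard := (Set.ncard_eq_toFinset_card Z hZfin).symm
  have honto := fam_head_onto famZ (by omega)
  refine ⟨↑R, ?_, ?_, ?_, ?_⟩
  · intro p hp
    exact hF.1 p hp
  · intro x hx
    obtain ⟨p, hp, hph⟩ := honto x (by rw [Set.Finite.mem_toFinset]; exact hx)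
    exact ⟨p, hp, hph⟩
  · intro p hp
    have hne := (hF.1 p hp).1
    have hl : p.getLast? = some (p.getLast hne) := List.getLast?_eq_getLast hne
    exact ⟨p.getLast hne, hF.2.2.1 p hp _ (by rw [hl]; rfl), hl⟩
  · intro p hp q hq hne
    exact hF.2.2.2 p hp q hq hne

theorem uncross {X T Z₁ Z₂ : Set α} {P : Finset (List α)} (famP : Fam A P X T)
    (S₁ S₂ : Finset α) (sep₁ : Sep A (X ∪ Z₁) T ↑S₁) (sep₂ : Sep A (X ∪ Z₂) T ↑S₂)
    (c₁ : S₁.card ≤ P.card) (c₂ : S₂.card ≤ P.card) :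
    ∃ S₃ : Finset α, S₃.card ≤ P.card ∧ Sep A (X ∪ Z₁ ∪ Z₂) T ↑S₃ := by
  classical
  rcases isEmpty_or_nonempty α with hα | hα
  · refine ⟨∅, by simp, ?_⟩
    intro w hw _ _ _
    obtain ⟨x, _⟩ := List.exists_mem_of_ne_nil w hw
    exact (hα.false x).elim
  haveI : Inhabited α := Classical.inhabited_of_nonempty hα
  have sepX₁ : Sep A X T ↑S₁ := sep_mono_source sep₁ Set.subset_union_left
  have sepX₂ : Sep A X T ↑S₂ := sep_mono_source sep₂ Set.subset_union_left
  have tight₁ := sep_tight famP S₁ sepX₁ c₁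
  have tight₂ := sep_tight famP S₂ sepX₂ c₂
  have hex : ∀ (S : Finset α), Sep A X T ↑S → ∀ p, p ∈ P → ∃ c, c ∈ S ∧ c ∈ p := by
    intro S hS p hp
    obtain ⟨hne, _, hch⟩ := famP.1 p hp
    obtain ⟨c, hc1, hc2⟩ := hS p hne hch (famP.2.1 p hp) (famP.2.2.1 p hp)
    exact ⟨c, by simpa using hc1, hc2⟩
  set σ₁ : List α → α := fun p => if h : ∃ c, c ∈ S₁ ∧ c ∈ p then h.choose else default with hσ₁def
  set σ₂ : List α → α := fun p => if h : ∃ c, c ∈ S₂ ∧ c ∈ p then h.choose else default with hσ₂def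
  have σspec₁ : ∀ p ∈ P, σ₁ p ∈ S₁ ∧ σ₁ p ∈ p := by
    intro p hp
    have h := hex S₁ sepX₁ p hp
    rw [hσ₁def]
    simp only [dif_pos h]
    exact h.choose_spec
  have σspec₂ : ∀ p ∈ P, σ₂ p ∈ S₂ ∧ σ₂ p ∈ p := by
    intro p hp
    have h := hex S₂ sepX₂ p hp
    rw [hσ₂def]
    simp only [dif_pos h]
    exact h.choose_spec
  have σuniq₁ : ∀ p ∈ P, ∀ c ∈ p, c ∈ S₁ → c = σ₁ p := by
    intro p hp c hcp hcS
    exact tight₁.1 p hp c hcp hcS (σ₁ p) (σspec₁ p hp).2 (σspec₁ p hp).1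
  have σuniq₂ : ∀ p ∈ P, ∀ c ∈ p, c ∈ S₂ → c = σ₂ p := by
    intro p hp c hcp hcS
    exact tight₂.1 p hp c hcp hcS (σ₂ p) (σspec₂ p hp).2 (σspec₂ p hp).1
  set m : List α → α := fun p =>
    if p.idxOf (σ₁ p) ≤ p.idxOf (σ₂ p) then σ₂ p else σ₁ p with hmdef
  refine ⟨P.image m, le_trans Finset.card_image_le le_rfl, ?_⟩
  intro w hw hc hh ht
  have hhead : w.head? = some (w.head hw) := List.head?_eq_head hw
  have hzZ : w.head hw ∈ X ∪ Z₁ ∪ Z₂ := hh _ (by rw [hhead]; rfl)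
  have hmeet : ∃ c ∈ w, c ∈ S₁ ∨ c ∈ S₂ := by
    rcases hzZ with h1 | h2
    · obtain ⟨c, hc1, hc2⟩ := sep₁ w hw hc (by
        intro z hz
        rw [hhead] at hz
        have : z = w.head hw := by simpa using hz.symm
        rw [this]; exact h1) ht
      exact ⟨c, hc2, Or.inl (by simpa using hc1)⟩
    · obtain ⟨c, hc1, hc2⟩ := sep₂ w hw hc (by
        intro z hz
        rw [hhead] at hz
        have : z = w.head hw := by simpa using hz.symm
        rw [this]; exact Or.inr h2) ht
      exact ⟨c, hc2, Or.inr (by simpa using hc1)⟩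
  obtain ⟨w₁, s, w₂, hdec, hsUn, hno⟩ := split_last hmeet
  have hsw : s ∈ w := by rw [hdec]; exact List.mem_append_right _ (by simp)
  rcases hsUn with hs₁ | hs₂
  · obtain ⟨p, hpP, hsp⟩ := tight₁.2 s hs₁
    have hσs : σ₁ p = s := (σuniq₁ p hpP s hsp hs₁).symm
    by_cases hs₂' : σ₂ p = s
    · have hmp : m p = s := by
        simp only [hmdef]
        split
        · exact hs₂'
        · exact hσs
      exact ⟨m p, by simpa using Finset.mem_image_of_mem m hpP, by rw [hmp]; exact hsw⟩
    · have hneidx : p.idxOf (σ₁ p) ≠ p.idxOf (σ₂ p) := by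
        intro he
        exact hs₂' (((List.idxOf_inj (σspec₂ p hpP).2).1 he.symm).trans hσs)
      rcases lt_or_gt_of_ne hneidx with hlt | hgt
      · exfalso
        exact hybrid_contra sep₂ (famP.1 p hpP).2.2
          (fun z hz => Or.inl (famP.2.1 p hpP z hz))
          (fun c hcp hcS => σuniq₂ p hpP c hcp hcS) hsp
          (by rw [← hσs]; exact hlt) hdec hc ht
          (fun c hcw hcS => hno c hcw (Or.inr hcS))
      · have hmp : m p = s := by
          simp only [hmdef]
          rw [if_neg (not_le.2 hgt)]
          exact hσs
        exact ⟨m p, by simpa using Finset.mem_image_of_mem m hpP, by rw [hmp]; exact hsw⟩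
  · obtain ⟨p, hpP, hsp⟩ := tight₂.2 s hs₂
    have hσs : σ₂ p = s := (σuniq₂ p hpP s hsp hs₂).symm
    by_cases hs₁' : σ₁ p = s
    · have hmp : m p = s := by
        simp only [hmdef]
        split
        · exact hσs
        · exact hs₁'
      exact ⟨m p, by simpa using Finset.mem_image_of_mem m hpP, by rw [hmp]; exact hsw⟩
    · have hneidx : p.idxOf (σ₁ p) ≠ p.idxOf (σ₂ p) := by
        intro he
        exact hs₁' (((List.idxOf_inj (σspec₁ p hpP).2).1 he).trans hσs)
      rcases lt_or_gt_of_ne hneidx with hlt | hgt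
      · have hmp : m p = s := by
          simp only [hmdef]
          rw [if_pos (le_of_lt hlt)]
          exact hσs
        exact ⟨m p, by simpa using Finset.mem_image_of_mem m hpP, by rw [hmp]; exact hsw⟩
      · exfalso
        exact hybrid_contra sep₁ (famP.1 p hpP).2.2
          (fun z hz => Or.inl (famP.2.1 p hpP z hz))
          (fun c hcp hcS => σuniq₁ p hpP c hcp hcS) hsp
          (by rw [← hσs]; exact hgt) hdec hc ht
          (fun c hcw hcS => hno c hcw (Or.inl hcS))

end Outer

end Gammoid

open Gammoid in
/-- The set system `Γ(D,T,E)` satisfies the independence axioms of a matroid: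
the empty set is independent, independence is downward closed, and augmentation holds. -/
theorem gammoid_indep_axioms {α : Type*} [Fintype α] (A : α → α → Prop) (T E : Set α) :
    ((∅ : Set α) ⊆ E ∧ ∃ R, IsRouting A R (∅ : Set α) T) ∧
    (∀ X Y : Set α, (Y ⊆ E ∧ ∃ R, IsRouting A R Y T) → X ⊆ Y →
      (X ⊆ E ∧ ∃ R, IsRouting A R X T)) ∧
    (∀ X Y : Set α, (X ⊆ E ∧ ∃ R, IsRouting A R X T) → (Y ⊆ E ∧ ∃ R, IsRouting A R Y T) →
      X.ncard < Y.ncard →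
      ∃ y ∈ Y \ X, (insert y X ⊆ E ∧ ∃ R, IsRouting A R (insert y X) T)) := by
  classical
  refine ⟨⟨Set.empty_subset E, (∅ : Set (List α)), ?_, ?_, ?_, ?_⟩, ?_, ?_⟩
  · intro p hp; exact absurd hp (Set.notMem_empty p)
  · intro x hx; exact absurd hx (Set.notMem_empty x)
  · intro p hp; exact absurd hp (Set.notMem_empty p)
  · intro p hp; exact absurd hp (Set.notMem_empty p)
  · rintro X Y ⟨hYE, R, hR⟩ hXY
    exact ⟨hXY.trans hYE, R, hR.1, fun x hx => hR.2.1 x (hXY hx), hR.2.2.1, hR.2.2.2⟩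
  · intro X Y hX hY hlt
    obtain ⟨hXE, RX, hRX⟩ := hX
    obtain ⟨hYE, RY, hRY⟩ := hY
    by_contra hcon
    push_neg at hcon
    have hcon' : ∀ y ∈ Y \ X, ¬ ∃ R, IsRouting A R (insert y X) T := by
      intro y hy hex
      obtain ⟨R, hR⟩ := hex
      exact hcon y hy (Set.insert_subset_iff.2 ⟨hYE hy.1, hXE⟩) R hR
    obtain ⟨P, famP, cardP, ontoP⟩ := routing_to_fam hRX
    obtain ⟨Q, famQ, cardQ, _⟩ := routing_to_fam hRY
    have hsep_y : ∀ y ∈ Y \ X, ∃ S : Finset α, Sep A (insert y X) T ↑S ∧ S.card ≤ X.ncard := by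
      intro y hy
      obtain ⟨S, hS, hcard⟩ := exists_sep_of_not_routing (hcon' y hy)
      have hins : (insert y X).ncard = X.ncard + 1 :=
        Set.ncard_insert_of_notMem hy.2 (Set.toFinite X)
      exact ⟨S, hS, by omega⟩
    have blanket : ∀ F : Finset α, ↑F ⊆ Y \ X →
        ∃ S : Finset α, S.card ≤ X.ncard ∧ Sep A (X ∪ ↑F) T ↑S := by
      intro F
      induction F using Finset.induction_on with
      | empty =>
        intro _
        obtain ⟨S, R, hS, hF, hc⟩ := menger' A X T
        have hXfin : X.Finite := Set.toFinite X
        have famX' : Fam A R ↑hXfin.toFinset T := by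
          rwa [Set.Finite.coe_toFinset]
        have hR : R.card ≤ X.ncard := by
          have h1 := fam_card_le_finsetSource famX'
          have h2 := (Set.ncard_eq_toFinset_card X hXfin).symm
          omega
        refine ⟨S, by omega, ?_⟩
        have he : X ∪ ↑(∅ : Finset α) = X := by simp
        rwa [he]
      | @insert y F hyF ih =>
        intro hsub
        have hsubF : ↑F ⊆ Y \ X := by
          intro z hz
          exact hsub (by simp [hz])
        obtain ⟨SF, hSFc, hSF⟩ := ih hsubF
        obtain ⟨Sy, hSy, hSyc⟩ := hsep_y y (hsub (by simp))
        have sep₂' : Sep A (X ∪ {y}) T ↑Sy :=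
          sep_mono_source hSy
            (by
              intro z hz
              rcases hz with h | h
              · exact Set.mem_insert_of_mem _ h
              · exact (Set.mem_singleton_iff.1 h) ▸ Set.mem_insert _ _)
        obtain ⟨S₃, hS₃c, hS₃⟩ := uncross famP SF Sy hSF sep₂' (by omega) (by omega)
        refine ⟨S₃, by omega, ?_⟩
        apply sep_mono_source hS₃
        intro z hz
        rcases hz with h | h
        · exact Or.inl (Or.inl h)
        · rw [Finset.coe_insert, Set.mem_insert_iff] at h
          rcases h with rfl | h
          · exact Or.inr rfl
          · exact Or.inl (Or.inr h)
    have hYXfin : (Y \ X).Finite := Set.toFinite _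
    obtain ⟨Sstar, hSc, hSsep⟩ := blanket hYXfin.toFinset (by rw [Set.Finite.coe_toFinset])
    have hsepY : Sep A Y T ↑Sstar := by
      apply sep_mono_source hSsep
      intro y hy
      rw [Set.Finite.coe_toFinset]
      by_cases h : y ∈ X
      · exact Or.inl h
      · exact Or.inr ⟨hy, h⟩
    have hQS : Q.card ≤ Sstar.card := fam_card_le_sep famQ Sstar hsepY
    omega
end

section
/- If M₁ is a minor of a matroid M₂ and M₂ is strongly base-orderable, then M₁ is strongly base-orderable (the class of strongly base-orderable matroids is closed under minors). -/
open Set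

/-- `M` is strongly base-orderable. -/
def Matroid.StronglyBaseOrderable {α : Type*} (M : Matroid α) : Prop :=
  ∀ B₁ B₂ : Set α, M.IsBase B₁ → M.IsBase B₂ →
    ∃ φ : α → α, Set.BijOn φ B₁ B₂ ∧ ∀ X ⊆ B₁, M.IsBase ((B₁ \ X) ∪ φ '' X)

/-- `N` is a minor of `M`: it arises by contracting an (independent) set `C` and deleting `D`. -/
def Matroid.IsMinorOf {α : Type*} (N M : Matroid α) : Prop :=
  ∃ C D : Set α, Disjoint C D ∧ C ∪ D ⊆ M.E ∧ M.Indep C ∧ N.E = M.E \ (C ∪ D) ∧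
    ∀ X ⊆ N.E, (N.Indep X ↔ M.Indep (X ∪ C))

namespace SBOProof

variable {α : Type*} {M : Matroid α} {R I₁ K J W : Set α}

lemma base_union_of_basis (hI₁ : M.IsBasis I₁ R) (hK : Disjoint K R)
    (hA : M.IsBase (I₁ ∪ K)) (hJ : M.IsBasis J R) : M.IsBase (J ∪ K) := by
  obtain ⟨B', hB', hJB', hB'u⟩ := hJ.indep.exists_isBase_subset_union_isBase hA
  have hJR : J ⊆ R := hJ.subset
  have hJeq : J = B' ∩ R :=
    hJ.eq_of_subset_indep (hB'.indep.subset inter_subset_left)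
      (subset_inter hJB' hJR) inter_subset_right
  have hB'JK : B' ⊆ J ∪ K := by
    intro b hb
    rcases hB'u hb with hbJ | hbIK
    · exact Or.inl hbJ
    rcases hbIK with hbI | hbK
    · exact Or.inl (hJeq ▸ ⟨hb, hI₁.subset hbI⟩)
    · exact Or.inr hbK
  have hKB' : K ⊆ B' := by
    intro k hk
    by_contra hkB'
    have hB'eq : B' = J ∪ (B' ∩ K) := subset_antisymm
      (fun b hb => (hB'JK hb).elim Or.inl (fun h => Or.inr ⟨hb, h⟩))
      (union_subset hJB' inter_subset_left)
    have hIK₀ : M.Indep (I₁ ∪ (B' ∩ K)) :=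
      hA.indep.subset (union_subset_union_right I₁ inter_subset_right)
    have hknotin : k ∉ I₁ ∪ (B' ∩ K) := by
      rintro (h | h)
      · exact (hK.ne_of_mem hk (hI₁.subset h)) rfl
      · exact hkB' h.1
    have hins : M.Indep (insert k (I₁ ∪ (B' ∩ K))) :=
      hA.indep.subset (insert_subset (Or.inr hk)
        (union_subset_union_right I₁ inter_subset_right))
    have hcl : k ∈ M.closure (I₁ ∪ (B' ∩ K)) := by
      have h1 : M.closure (J ∪ (B' ∩ K)) = M.closure (I₁ ∪ (B' ∩ K)) := by
        rw [← M.closure_union_closure_left_eq J (B' ∩ K), hJ.closure_eq_closure,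
          ← hI₁.closure_eq_closure, M.closure_union_closure_left_eq]
      have h2 : k ∈ M.closure B' := by
        rw [hB'.closure_eq]; exact hA.subset_ground (Or.inr hk)
      rw [hB'eq, h1] at h2
      exact h2
    exact ((hIK₀.insert_indep_iff_of_notMem hknotin).mp hins).2 hcl
  have hfin : B' = J ∪ K := subset_antisymm hB'JK (union_subset hJB' hKB')
  exact hfin ▸ hB'

lemma indep_union (hI₁ : M.IsBasis I₁ R) (hK : Disjoint K R) (hA : M.IsBase (I₁ ∪ K))
    (hJi : M.Indep J) (hJR : J ⊆ R) : M.Indep (J ∪ K) := by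
  obtain ⟨J', hJ', hJJ'⟩ := hJi.subset_isBasis_of_subset hJR hI₁.subset_ground
  exact (base_union_of_basis hI₁ hK hA hJ').indep.subset (union_subset_union_left K hJJ')

lemma basis_of_base_union (hI₁ : M.IsBasis I₁ R) (hK : Disjoint K R) (hA : M.IsBase (I₁ ∪ K))
    (hWR : W ⊆ R) (hWK : M.IsBase (W ∪ K)) : M.IsBasis W R := by
  have hWi : M.Indep W := hWK.indep.subset subset_union_left
  refine hWi.isBasis_of_forall_insert hWR (fun z hz => ?_)
  rw [Matroid.dep_iff]
  refine ⟨fun hins => ?_, insert_subset (hI₁.subset_ground hz.1) hWi.subset_ground⟩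
  have hzK : z ∉ W ∪ K := by
    rintro (h | h)
    · exact hz.2 h
    · exact (hK.ne_of_mem h hz.1) rfl
  have h2 : M.Indep (insert z (W ∪ K)) := by
    rw [← insert_union]
    exact indep_union hI₁ hK hA hins (insert_subset hz.1 hWR)
  have heq := hWK.eq_of_subset_indep h2 (subset_insert _ _)
  have : z ∈ W ∪ K := by rw [heq]; exact mem_insert _ _
  exact hzK this



lemma sbo_core [Nonempty α] {B₁ B₂ P : Set α} (hd1 : Disjoint B₁ P) (hd2 : Disjoint B₂ P)
    (hA₁ : M.IsBase (B₁ ∪ P)) (hA₂ : M.IsBase (B₂ ∪ P)) (φ : α → α)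
    (hbij : Set.BijOn φ (B₁ ∪ P) (B₂ ∪ P))
    (hex : ∀ X ⊆ B₁ ∪ P, M.IsBase (((B₁ ∪ P) \ X) ∪ φ '' X)) :
    ∃ ψ : α → α, Set.BijOn ψ B₁ B₂ ∧ ∀ X ⊆ B₁, M.IsBase (((B₁ \ X) ∪ P) ∪ ψ '' X) := by
  classical
  set A₁ := B₁ ∪ P with hA₁def
  set A₂ := B₂ ∪ P with hA₂def
  set g := Function.invFunOn φ A₁ with hgdef
  have hinv : Set.InvOn g φ A₁ A₂ := hbij.invOn_invFunOn
  have hmapsφ : ∀ x ∈ A₁, φ x ∈ A₂ := hbij.mapsTo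
  have himgeq : φ '' A₁ = A₂ := hbij.image_eq
  have hgmem : ∀ y ∈ A₂, g y ∈ A₁ := by
    intro y hy
    rw [← himgeq] at hy
    obtain ⟨a, ha, rfl⟩ := hy
    exact Function.invFunOn_mem ⟨a, ha, rfl⟩
  have hφg : ∀ y ∈ A₂, φ (g y) = y := fun y hy => hinv.2 hy
  have base_antichain : ∀ {B B' : Set α}, M.IsBase B → M.IsBase B' → B ⊆ B' → B = B' :=
    fun hB hB' hss => hB.eq_of_subset_indep hB'.indep hss
  have hD₁ : A₁ \ A₂ = B₁ \ B₂ := by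
    rw [hA₁def, hA₂def]
    ext a
    simp only [mem_diff, mem_union]
    constructor
    · rintro ⟨h | h, h2⟩
      · exact ⟨h, fun hb => h2 (Or.inl hb)⟩
      · exact (h2 (Or.inr h)).elim
    · rintro ⟨ha, h2⟩
      exact ⟨Or.inl ha, fun hc => hc.elim h2 (fun hp => (hd1.ne_of_mem ha hp) rfl)⟩
  have hD₂ : A₂ \ A₁ = B₂ \ B₁ := by
    rw [hA₁def, hA₂def]
    ext a
    simp only [mem_diff, mem_union]
    constructor
    · rintro ⟨h | h, h2⟩
      · exact ⟨h, fun hb => h2 (Or.inl hb)⟩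
      · exact (h2 (Or.inr h)).elim
    · rintro ⟨ha, h2⟩
      exact ⟨Or.inl ha, fun hc => hc.elim h2 (fun hp => (hd2.ne_of_mem ha hp) rfl)⟩
  -- no infinite forward chains
  have exit₁ : ∀ x ∈ A₁ \ A₂, ∃ n, 0 < n ∧ φ^[n] x ∉ A₁ ∩ A₂ := by
    intro x hx
    by_contra hcon
    push_neg at hcon
    set X := Set.range (fun n => φ^[n] x) with hXdef
    have hxX : x ∈ X := ⟨0, rfl⟩
    have hXA₁ : X ⊆ A₁ := by
      rintro _ ⟨n, rfl⟩
      cases n with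
      | zero => exact hx.1
      | succ n => exact (hcon (n+1) (Nat.succ_pos n)).1
    have himg : φ '' X = X \ {x} := by
      apply subset_antisymm
      · rintro b hb
        obtain ⟨a, haX, rfl⟩ := hb
        obtain ⟨n, hn⟩ := haX
        have hn' : φ^[n] x = a := hn
        subst hn'
        refine ⟨⟨n+1, show φ^[n+1] x = φ (φ^[n] x) from Function.iterate_succ_apply' φ n x⟩, ?_⟩
        simp only [mem_singleton_iff]
        intro hEq
        have h1 : φ^[n+1] x = x := by rw [Function.iterate_succ_apply']; exact hEq
        exact hx.2 (h1 ▸ (hcon (n+1) (Nat.succ_pos n)).2)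
      · rintro a ⟨haX, hne⟩
        obtain ⟨n, hn⟩ := haX
        have hn' : φ^[n] x = a := hn
        subst hn'
        simp only [mem_singleton_iff] at hne
        cases n with
        | zero => exact absurd rfl hne
        | succ n => exact ⟨φ^[n] x, ⟨n, rfl⟩, (Function.iterate_succ_apply' φ n x).symm⟩
    have hbase := hex X hXA₁
    rw [himg] at hbase
    have heq : (A₁ \ X) ∪ (X \ {x}) = A₁ \ {x} := by
      ext a
      simp only [mem_union, mem_diff, mem_singleton_iff]
      constructor
      · rintro (⟨h1, h2⟩ | ⟨h1, h2⟩)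
        · exact ⟨h1, fun h => h2 (by rw [h]; exact hxX)⟩
        · exact ⟨hXA₁ h1, h2⟩
      · rintro ⟨h1, h2⟩
        by_cases h : a ∈ X
        · exact Or.inr ⟨h, h2⟩
        · exact Or.inl ⟨h1, h⟩
    rw [heq] at hbase
    have hfin := base_antichain hbase hA₁ diff_subset
    have hx1 := hx.1
    rw [← hfin] at hx1
    exact hx1.2 rfl
  -- no infinite backward chains
  have exit₂ : ∀ y ∈ A₂ \ A₁, ∃ n, 0 < n ∧ g^[n] y ∉ A₁ ∩ A₂ := by
    intro y hy
    by_contra hcon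
    push_neg at hcon
    set X := Set.range (fun n => g^[n+1] y) with hXdef
    have hXQ : ∀ a ∈ X, a ∈ A₁ ∩ A₂ := by rintro _ ⟨n, rfl⟩; exact hcon (n+1) (Nat.succ_pos n)
    have hXA₁ : X ⊆ A₁ := fun a ha => (hXQ a ha).1
    have himg : φ '' X = insert y X := by
      apply subset_antisymm
      · rintro b hb
        obtain ⟨a, haX, rfl⟩ := hb
        obtain ⟨n, hn⟩ := haX
        have hn' : g^[n+1] y = a := hn
        subst hn'
        have h1 : g^[n+1] y = g (g^[n] y) := Function.iterate_succ_apply' g n y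
        have h2 : g^[n] y ∈ A₂ := by
          cases n with
          | zero => exact hy.1
          | succ m => exact (hcon (m+1) (Nat.succ_pos m)).2
        rw [h1, hφg _ h2]
        cases n with
        | zero => exact Or.inl rfl
        | succ m => exact Or.inr ⟨m, rfl⟩
      · intro a ha
        rcases ha with ha | ⟨n, hn⟩
        · subst ha
          refine ⟨g a, ⟨0, ?_⟩, hφg a hy.1⟩
          show g^[0+1] a = g a
          simp
        · have hn' : g^[n+1] y = a := hn
          subst hn'
          refine ⟨g^[n+2] y, ⟨n+1, rfl⟩, ?_⟩
          rw [Function.iterate_succ_apply' g (n+1) y]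
          exact hφg _ (hXQ _ ⟨n, rfl⟩).2
    have hbase := hex X hXA₁
    rw [himg] at hbase
    have heq : (A₁ \ X) ∪ insert y X = insert y A₁ := by
      ext a
      simp only [mem_union, mem_diff, mem_insert_iff]
      constructor
      · rintro (⟨h1, _⟩ | (rfl | h))
        · exact Or.inr h1
        · exact Or.inl rfl
        · exact Or.inr (hXA₁ h)
      · rintro (rfl | h)
        · exact Or.inr (Or.inl rfl)
        · by_cases hX : a ∈ X
          · exact Or.inr (Or.inr hX)
          · exact Or.inl ⟨h, hX⟩
    rw [heq] at hbase
    have hfin := base_antichain hA₁ hbase (subset_insert y A₁)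
    have : y ∈ A₁ := by rw [hfin]; exact mem_insert y A₁
    exact hy.2 this
  -- chain cancellation
  have cancel : ∀ k : ℕ, ∀ x₁ x₂ : α, (∀ i < k, φ^[i] x₁ ∈ A₁) → (∀ i < k, φ^[i] x₂ ∈ A₁) →
      φ^[k] x₁ = φ^[k] x₂ → x₁ = x₂ := by
    intro k
    induction k with
    | zero => intro x₁ x₂ _ _ h; simpa using h
    | succ k ih =>
      intro x₁ x₂ hp₁ hp₂ h
      rw [Function.iterate_succ_apply' φ k x₁, Function.iterate_succ_apply' φ k x₂] at h
      have h2 := hbij.injOn (hp₁ k (Nat.lt_succ_self k)) (hp₂ k (Nat.lt_succ_self k)) h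
      exact ih x₁ x₂ (fun i hi => hp₁ i (hi.trans (Nat.lt_succ_self k)))
        (fun i hi => hp₂ i (hi.trans (Nat.lt_succ_self k))) h2
  -- exit time function
  set nf : α → ℕ := fun x => if hx : x ∈ A₁ \ A₂ then Nat.find (exit₁ x hx) else 0 with hnfdef
  have hnf : ∀ x (hx : x ∈ A₁ \ A₂), 0 < nf x ∧ φ^[nf x] x ∉ A₁ ∩ A₂ := by
    intro x hx
    simp only [hnfdef, dif_pos hx]
    exact Nat.find_spec (exit₁ x hx)
  have hnfmin : ∀ x (hx : x ∈ A₁ \ A₂) i, 0 < i → i < nf x → φ^[i] x ∈ A₁ ∩ A₂ := by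
    intro x hx i h0 hi
    simp only [hnfdef, dif_pos hx] at hi
    have := Nat.find_min (exit₁ x hx) hi
    push_neg at this
    exact this h0
  have hnfle : ∀ x (hx : x ∈ A₁ \ A₂) k, 0 < k → φ^[k] x ∉ A₁ ∩ A₂ → nf x ≤ k := by
    intro x hx k h0 hk
    simp only [hnfdef, dif_pos hx]
    exact Nat.find_le ⟨h0, hk⟩
  have hpre : ∀ x (hx : x ∈ A₁ \ A₂) i, i < nf x → φ^[i] x ∈ A₁ := by
    intro x hx i hi
    rcases Nat.eq_zero_or_pos i with rfl | h0
    · exact hx.1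
    · exact (hnfmin x hx i h0 hi).1
  have hψexit : ∀ x (hx : x ∈ A₁ \ A₂), φ^[nf x] x ∈ A₂ \ A₁ := by
    intro x hx
    obtain ⟨hpos, hnot⟩ := hnf x hx
    have hA2 : φ^[nf x] x ∈ A₂ := by
      have h3 : φ^[nf x] x = φ (φ^[nf x - 1] x) := by
        conv_lhs => rw [show nf x = (nf x - 1) + 1 by omega]
        exact Function.iterate_succ_apply' φ _ x
      rw [h3]
      exact hmapsφ _ (hpre x hx _ (by omega))
    exact ⟨hA2, fun hA1 => hnot ⟨hA1, hA2⟩⟩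
  -- the bijection
  set ψ : α → α := fun x => if x ∈ A₁ \ A₂ then φ^[nf x] x else x with hψdef
  have hψval : ∀ x, x ∈ A₁ \ A₂ → ψ x = φ^[nf x] x := by
    intro x hx; simp only [hψdef, if_pos hx]
  have hψid : ∀ x, x ∉ A₁ \ A₂ → ψ x = x := by
    intro x hx; simp only [hψdef, if_neg hx]
  have hmaps : MapsTo ψ B₁ B₂ := by
    intro x hx
    by_cases hxd : x ∈ A₁ \ A₂
    · have h1 := hψexit x hxd
      rw [← hψval x hxd, hD₂] at h1
      exact h1.1
    · rw [hψid x hxd]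
      have hxA₂ : x ∈ A₂ := by
        by_contra hcon
        exact hxd ⟨Or.inl hx, hcon⟩
      rw [hA₂def] at hxA₂
      rcases hxA₂ with h | h
      · exact h
      · exact absurd rfl (hd1.ne_of_mem hx h)
  have hinjaux : ∀ x₁ x₂ (h₁ : x₁ ∈ A₁ \ A₂) (h₂ : x₂ ∈ A₁ \ A₂),
      nf x₁ ≤ nf x₂ → ψ x₁ = ψ x₂ → x₁ = x₂ := by
    intro x₁ x₂ h₁ h₂ hle heq
    rw [hψval x₁ h₁, hψval x₂ h₂] at heq
    obtain ⟨d, hd⟩ := Nat.exists_eq_add_of_le hle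
    have heq2 : φ^[nf x₁] x₁ = φ^[nf x₁] (φ^[d] x₂) := by
      rw [heq, hd]
      exact Function.iterate_add_apply φ (nf x₁) d x₂
    have hcanc := cancel (nf x₁) x₁ (φ^[d] x₂) (fun i hi => hpre x₁ h₁ i hi)
      (fun i hi => by
        rw [← Function.iterate_add_apply]
        exact hpre x₂ h₂ (i + d) (by omega)) heq2
    rcases Nat.eq_zero_or_pos d with rfl | hdpos
    · simpa using hcanc
    · exfalso
      have hn₁pos := (hnf x₁ h₁).1
      have hmem := (hnfmin x₂ h₂ d hdpos (by omega)).2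
      rw [← hcanc] at hmem
      exact h₁.2 hmem
  have hinj : InjOn ψ B₁ := by
    intro x₁ hx₁ x₂ hx₂ heq
    by_cases h₁ : x₁ ∈ A₁ \ A₂ <;> by_cases h₂ : x₂ ∈ A₁ \ A₂
    · rcases le_total (nf x₁) (nf x₂) with hle | hle
      · exact hinjaux x₁ x₂ h₁ h₂ hle heq
      · exact (hinjaux x₂ x₁ h₂ h₁ hle heq.symm).symm
    · exfalso
      have e1 := hψexit x₁ h₁
      rw [← hψval x₁ h₁] at e1
      have e2 : x₂ ∈ A₁ := Or.inl hx₂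
      rw [← hψid x₂ h₂, ← heq] at e2
      exact e1.2 e2
    · exfalso
      have e1 := hψexit x₂ h₂
      rw [← hψval x₂ h₂] at e1
      have e2 : x₁ ∈ A₁ := Or.inl hx₁
      rw [← hψid x₁ h₁, heq] at e2
      exact e1.2 e2
    · rw [hψid x₁ h₁, hψid x₂ h₂] at heq
      exact heq
  have hsurj : SurjOn ψ B₁ B₂ := by
    intro y hy
    by_cases hyB₁ : y ∈ B₁
    · exact ⟨y, hyB₁, hψid y (fun h => h.2 (Or.inl hy))⟩
    · have hyd : y ∈ A₂ \ A₁ := by rw [hD₂]; exact ⟨hy, hyB₁⟩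
      obtain ⟨hmpos, hmnot⟩ := Nat.find_spec (exit₂ y hyd)
      set m := Nat.find (exit₂ y hyd) with hmdef
      have hgmid : ∀ i, 0 < i → i < m → g^[i] y ∈ A₁ ∩ A₂ := by
        intro i h0 hlt
        have := Nat.find_min (exit₂ y hyd) hlt
        push_neg at this
        exact this h0
      have hgpre : ∀ i, i < m → g^[i] y ∈ A₂ := by
        intro i hlt
        rcases Nat.eq_zero_or_pos i with rfl | h0
        · exact hyd.1
        · exact (hgmid i h0 hlt).2
      have hgA₁ : ∀ i, 0 < i → i ≤ m → g^[i] y ∈ A₁ := by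
        intro i h0 hle
        have h1 : g^[i] y = g (g^[i-1] y) := by
          conv_lhs => rw [show i = (i - 1) + 1 by omega]
          exact Function.iterate_succ_apply' g _ y
        rw [h1]
        exact hgmem _ (hgpre (i-1) (by omega))
      have hxd : g^[m] y ∈ A₁ \ A₂ := by
        refine ⟨hgA₁ m hmpos le_rfl, fun h => hmnot ⟨hgA₁ m hmpos le_rfl, h⟩⟩
      have hφx : ∀ i, i ≤ m → φ^[i] (g^[m] y) = g^[m - i] y := by
        intro i
        induction i with
        | zero => intro _; simp
        | succ i ih =>
          intro hi
          have h1 : m - i = (m - (i+1)) + 1 := by omega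
          rw [Function.iterate_succ_apply' φ i (g^[m] y), ih (by omega), h1,
            Function.iterate_succ_apply' g (m - (i+1)) y, hφg _ (hgpre _ (by omega))]
      have hφmx : φ^[m] (g^[m] y) = y := by
        have := hφx m le_rfl
        simpa using this
      have hnx : nf (g^[m] y) = m := by
        have hub : nf (g^[m] y) ≤ m :=
          hnfle _ hxd m hmpos (by rw [hφmx]; exact fun h => hyd.2 h.1)
        have hnfpos := (hnf _ hxd).1
        have hlb : ¬ nf (g^[m] y) < m := by
          intro hlt
          exact (hnf _ hxd).2 (by
            rw [hφx (nf (g^[m] y)) (by omega)]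
            exact hgmid (m - nf (g^[m] y)) (by omega) (by omega))
        omega
      refine ⟨g^[m] y, ?_, ?_⟩
      · have := hxd
        rw [hD₁] at this
        exact this.1
      · rw [hψval _ hxd, hnx, hφmx]
  -- the exchange property
  refine ⟨ψ, ⟨hmaps, hinj, hsurj⟩, ?_⟩
  intro X hXB₁
  set X' := X ∩ (A₁ \ A₂) with hX'def
  have hX'X : X' ⊆ X := inter_subset_left
  set S := {a | ∃ x ∈ X', ∃ i < nf x, φ^[i] x = a} with hSdef
  have hX'S : X' ⊆ S := fun x hx => ⟨x, hx, 0, (hnf x hx.2).1, rfl⟩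
  have hSA₁ : S ⊆ A₁ := by
    rintro a ⟨x, hx, i, hi, rfl⟩
    exact hpre x hx.2 i hi
  have hSimg : φ '' S = (S \ X') ∪ ψ '' X' := by
    apply subset_antisymm
    · rintro _ ⟨a, ⟨x, hx, i, hi, rfl⟩, rfl⟩
      have hstep : φ (φ^[i] x) = φ^[i+1] x := (Function.iterate_succ_apply' φ i x).symm
      rcases Nat.lt_or_ge (i+1) (nf x) with hlt | hge
      · left
        rw [hstep]
        refine ⟨⟨x, hx, i+1, hlt, rfl⟩, fun hmem => ?_⟩
        exact hmem.2.2 (hnfmin x hx.2 (i+1) (Nat.succ_pos i) hlt).2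
      · right
        have hieq : i + 1 = nf x := by omega
        rw [hstep, hieq]
        exact ⟨x, hx, hψval x hx.2⟩
    · rintro a (⟨haS, haX'⟩ | ⟨x, hx, rfl⟩)
      · obtain ⟨x, hx, i, hi, rfl⟩ := haS
        rcases Nat.eq_zero_or_pos i with rfl | hipos
        · exact absurd hx (by simpa using haX')
        · refine ⟨φ^[i-1] x, ⟨x, hx, i-1, by omega, rfl⟩, ?_⟩
          have h2 : i - 1 + 1 = i := by omega
          conv_rhs => rw [← h2]
          rw [Function.iterate_succ_apply' φ (i-1) x]
      · rw [hψval x hx.2]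
        have hnfpos := (hnf x hx.2).1
        refine ⟨φ^[nf x - 1] x, ⟨x, hx, nf x - 1, by omega, rfl⟩, ?_⟩
        have h2 : nf x - 1 + 1 = nf x := by omega
        conv_rhs => rw [← h2]
        rw [Function.iterate_succ_apply' φ (nf x - 1) x]
  have hbase := hex S hSA₁
  rw [hSimg] at hbase
  have e1 : (A₁ \ S) ∪ (S \ X') = A₁ \ X' := by
    ext a
    constructor
    · rintro (⟨h1, h2⟩ | ⟨h1, h2⟩)
      · exact ⟨h1, fun h => h2 (hX'S h)⟩
      · exact ⟨hSA₁ h1, h2⟩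
    · rintro ⟨h1, h2⟩
      by_cases h : a ∈ S
      · exact Or.inr ⟨h, h2⟩
      · exact Or.inl ⟨h1, h⟩
  have e2 : A₁ \ X' = ((B₁ \ X) ∪ P) ∪ (X \ X') := by
    ext a
    constructor
    · rintro ⟨h1, h2⟩
      rw [hA₁def] at h1
      rcases h1 with h | h
      · by_cases hX : a ∈ X
        · exact Or.inr ⟨hX, h2⟩
        · exact Or.inl (Or.inl ⟨h, hX⟩)
      · exact Or.inl (Or.inr h)
    · rintro ((⟨h1, h2⟩ | h) | ⟨h1, h2⟩)
      · exact ⟨Or.inl h1, fun hc => h2 (hX'X hc)⟩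
      · exact ⟨Or.inr h, fun hc => (hd1.ne_of_mem (hXB₁ (hX'X hc)) h) rfl⟩
      · exact ⟨Or.inl (hXB₁ h1), h2⟩
  have h4 : ψ '' (X \ X') = X \ X' := by
    rw [show ψ '' (X \ X') = id '' (X \ X') from
      Set.image_congr (fun a ha => hψid a (fun hmem => ha.2 ⟨ha.1, hmem⟩)), Set.image_id]
  have e3 : (X \ X') ∪ ψ '' X' = ψ '' X := by
    conv_rhs => rw [← Set.union_diff_cancel hX'X]
    rw [Set.image_union, h4, Set.union_comm]
  have hfinal : ((A₁ \ S) ∪ ((S \ X') ∪ ψ '' X')) = ((B₁ \ X) ∪ P) ∪ ψ '' X :=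
    calc ((A₁ \ S) ∪ ((S \ X') ∪ ψ '' X')) = ((A₁ \ S) ∪ (S \ X')) ∪ ψ '' X' :=
        (union_assoc _ _ _).symm
      _ = (A₁ \ X') ∪ ψ '' X' := by rw [e1]
      _ = (((B₁ \ X) ∪ P) ∪ (X \ X')) ∪ ψ '' X' := by rw [e2]
      _ = ((B₁ \ X) ∪ P) ∪ ((X \ X') ∪ ψ '' X') := union_assoc _ _ _
      _ = ((B₁ \ X) ∪ P) ∪ ψ '' X := by rw [e3]
  exact hfinal ▸ hbase


end SBOProof

/-- The class of strongly base-orderable matroids is closed under minors. -/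

theorem stronglyBaseOrderable_of_minor {α : Type*} (M₁ M₂ : Matroid α)
    (h : M₁.IsMinorOf M₂) (hM₂ : M₂.StronglyBaseOrderable) :
    M₁.StronglyBaseOrderable := by
  obtain ⟨C, D, hCD, hsub, hC, hE, hind⟩ := h
  intro B₁ B₂ hB₁ hB₂
  cases isEmpty_or_nonempty α with
  | inl hα =>
    refine ⟨id, ?_, ?_⟩
    · rw [Set.eq_empty_of_isEmpty B₁, Set.eq_empty_of_isEmpty B₂]
      exact ⟨fun x hx => hx.elim, fun x hx => hx.elim, fun x hx => hx.elim⟩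
    · intro X hX
      have h1 : (B₁ \ X) ∪ id '' X = B₁ := by
        simp [Set.eq_empty_of_isEmpty X, Set.eq_empty_of_isEmpty B₁]
      rw [h1]
      exact hB₁
  | inr hα =>
    have hRE : M₁.E ∪ C ⊆ M₂.E :=
      union_subset (by rw [hE]; exact diff_subset) (subset_union_left.trans hsub)
    have hMEC : Disjoint M₁.E C := by
      rw [hE]
      exact disjoint_sdiff_left.mono_right subset_union_left
    have toBasis : ∀ {B : Set α}, M₁.IsBase B → M₂.IsBasis (B ∪ C) (M₁.E ∪ C) := by
      intro B hB
      have hBE : B ⊆ M₁.E := hB.subset_ground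
      have hBi : M₂.Indep (B ∪ C) := (hind B hBE).mp hB.indep
      refine hBi.isBasis_of_forall_insert (union_subset_union_left C hBE) (fun z hz => ?_)
      rw [Matroid.dep_iff]
      have hzE : z ∈ M₁.E := by
        rcases hz.1 with h | h
        · exact h
        · exact absurd (Or.inr h) hz.2
      refine ⟨fun hins => ?_, insert_subset (hRE hz.1) hBi.subset_ground⟩
      have h2 : M₁.Indep (insert z B) := (hind _ (insert_subset hzE hBE)).mpr
        (by rw [insert_union]; exact hins)
      have heq := hB.eq_of_subset_indep h2 (subset_insert _ _)
      have hzB : z ∈ B := by rw [heq]; exact mem_insert _ _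
      exact hz.2 (Or.inl hzB)
    have ofBasis : ∀ {W : Set α}, W ⊆ M₁.E → M₂.IsBasis (W ∪ C) (M₁.E ∪ C) → M₁.IsBase W := by
      intro W hWE hWb
      rw [Matroid.isBase_iff_maximal_indep]
      refine ⟨(hind W hWE).mpr hWb.indep, ?_⟩
      intro I hI hWI
      have hIE : I ⊆ M₁.E := hI.subset_ground
      have heq : W ∪ C = I ∪ C :=
        hWb.eq_of_subset_indep ((hind I hIE).mp hI) (union_subset_union_left C hWI)
          (union_subset_union_left C hIE)
      intro x hx
      have hxWC : x ∈ W ∪ C := by rw [heq]; exact Or.inl hx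
      rcases hxWC with h | h
      · exact h
      · exact absurd rfl (hMEC.ne_of_mem (hIE hx) h)
    have hI₁b : M₂.IsBasis (B₁ ∪ C) (M₁.E ∪ C) := toBasis hB₁
    obtain ⟨B₀, hB₀⟩ := M₂.exists_isBase
    obtain ⟨A₁, hA₁, hIA₁, hA₁sub⟩ := hI₁b.indep.exists_isBase_subset_union_isBase hB₀
    have hKR : Disjoint (A₁ \ (B₁ ∪ C)) (M₁.E ∪ C) := by
      rw [disjoint_left]
      intro k hk hkR
      have hins : M₂.Indep (insert k (B₁ ∪ C)) := hA₁.indep.subset (insert_subset hk.1 hIA₁)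
      have heq := hI₁b.eq_of_subset_indep hins (subset_insert _ _) (insert_subset hkR hI₁b.subset)
      have : k ∈ B₁ ∪ C := by rw [heq]; exact mem_insert _ _
      exact hk.2 this
    have hA₁eq : (B₁ ∪ C) ∪ (A₁ \ (B₁ ∪ C)) = A₁ := union_diff_cancel hIA₁
    have hA₁' : M₂.IsBase ((B₁ ∪ C) ∪ (A₁ \ (B₁ ∪ C))) := by rw [hA₁eq]; exact hA₁
    have keyEquiv : ∀ {W : Set α}, W ⊆ M₁.E →
        (M₁.IsBase W ↔ M₂.IsBase ((W ∪ C) ∪ (A₁ \ (B₁ ∪ C)))) := by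
      intro W hWE
      constructor
      · intro hW
        exact SBOProof.base_union_of_basis hI₁b hKR hA₁' (toBasis hW)
      · intro hW
        exact ofBasis hWE
          (SBOProof.basis_of_base_union hI₁b hKR hA₁' (union_subset_union_left C hWE) hW)
    have hA₁P : M₂.IsBase (B₁ ∪ (C ∪ A₁ \ (B₁ ∪ C))) := by
      rw [← union_assoc]
      exact (keyEquiv hB₁.subset_ground).mp hB₁
    have hA₂P : M₂.IsBase (B₂ ∪ (C ∪ A₁ \ (B₁ ∪ C))) := by
      rw [← union_assoc]
      exact (keyEquiv hB₂.subset_ground).mp hB₂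
    have hd1 : Disjoint B₁ (C ∪ A₁ \ (B₁ ∪ C)) := by
      rw [disjoint_union_right]
      exact ⟨hMEC.mono_left hB₁.subset_ground,
        (hKR.mono_right (hB₁.subset_ground.trans subset_union_left)).symm⟩
    have hd2 : Disjoint B₂ (C ∪ A₁ \ (B₁ ∪ C)) := by
      rw [disjoint_union_right]
      exact ⟨hMEC.mono_left hB₂.subset_ground,
        (hKR.mono_right (hB₂.subset_ground.trans subset_union_left)).symm⟩
    obtain ⟨φ, hφbij, hφex⟩ := hM₂ _ _ hA₁P hA₂P
    obtain ⟨ψ, hψbij, hψex⟩ := SBOProof.sbo_core hd1 hd2 hA₁P hA₂P φ hφbij hφex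
    refine ⟨ψ, hψbij, fun X hX => ?_⟩
    have hb := hψex X hX
    have hWE : (B₁ \ X) ∪ ψ '' X ⊆ M₁.E := by
      apply union_subset (diff_subset.trans hB₁.subset_ground)
      rintro _ ⟨x, hx, rfl⟩
      exact hB₂.subset_ground (hψbij.mapsTo (hX hx))
    refine (keyEquiv hWE).mpr ?_
    have hset : (((B₁ \ X) ∪ ψ '' X) ∪ C) ∪ (A₁ \ (B₁ ∪ C)) =
        ((B₁ \ X) ∪ (C ∪ A₁ \ (B₁ ∪ C))) ∪ ψ '' X := by
      ext a
      simp only [mem_union]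
      tauto
    rw [hset]
    exact hb
end

section
/- If M is a restriction of N to X ⊆ E such that N arises from M by adding a single element e in general position on a flat F₁ of M (i.e., the modular cut of flats of M whose closure in N contains e has unique minimal element F₁), and M is a gammoid, then N is a gammoid: given a representation (D, T, X) of M with e ∉ V(D), the triple (D', T, X ∪ {e}) with D' obtained from D by adding vertex e and arcs from e to every element of F₁ represents N. -/
open Set Matroid

/-- `(D,T)` with vertex set `V` (inside the ambient type) represents the matroid `M`. -/
def RepresentsOn {α : Type*} (A : α → α → Prop) (V T : Set α) (M : Matroid α) : Prop :=
  M.E ⊆ V ∧ T ⊆ V ∧ (∀ x y, A x y → x ∈ V ∧ y ∈ V) ∧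
  ∀ X : Set α, M.Indep X ↔ X ⊆ M.E ∧ ∃ R, IsRouting A R X T

namespace GammoidAux

variable {α : Type*}

lemma flat_closure (M : Matroid α) (Y : Set α) : M.IsFlat (M.closure Y) := by
  rw [Matroid.closure_def, sInter_eq_iInter]
  haveI : Nonempty {F // F ∈ {F | M.IsFlat F ∧ Y ∩ M.E ⊆ F}} :=
    ⟨⟨M.E, M.ground_isFlat, inter_subset_right⟩⟩
  exact Matroid.IsFlat.iInter fun F => F.2.1

lemma closure_sub (N : Matroid α) (X Y : Set α) (hXN : X ⊆ N.E) (hYX : Y ⊆ X) :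
    (N ↾ X).closure Y ⊆ N.closure Y := by
  set M := N ↾ X with hM
  have hYE : Y ⊆ M.E := hYX
  intro x hx
  obtain ⟨I, hI⟩ := M.exists_isBasis Y hYE
  rw [← hI.closure_eq_closure] at hx
  have hNI : N.Indep I := (Matroid.restrict_indep_iff.1 hI.indep).1
  by_cases hxI : x ∈ I
  · exact N.subset_closure Y (hYX.trans hXN) (hI.subset hxI)
  · have hdep : M.Dep (insert x I) := (hI.indep.mem_closure_iff_of_notMem hxI).1 hx
    have hsubX : insert x I ⊆ X := hdep.subset_ground
    have hNdep : N.Dep (insert x I) := by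
      rw [Matroid.dep_iff]
      refine ⟨fun hNi => hdep.not_indep ?_, hsubX.trans hXN⟩
      exact Matroid.restrict_indep_iff.2 ⟨hNi, hsubX⟩
    have := (hNI.mem_closure_iff_of_notMem hxI).2 hNdep
    exact N.closure_subset_closure hI.subset this

lemma key_lemma (M N : Matroid α) (X : Set α) (e : α) (F₁ : Set α)
    (hM : M = N ↾ X) (hNE : N.E = insert e X)
    (hF₁X : F₁ ⊆ X)
    (hcut : ∀ F : Set α, M.IsFlat F → (e ∈ N.closure F ↔ F₁ ⊆ F))
    (Y : Set α) (hYX : Y ⊆ X) (heY : e ∉ Y) :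
    N.Indep (insert e Y) ↔ ∃ f ∈ F₁, f ∉ Y ∧ M.Indep (insert f Y) := by
  have hME : M.E = X := by rw [hM]; rfl
  have hXN : X ⊆ N.E := by rw [hNE]; exact subset_insert _ _
  have hMindep : ∀ Z, M.Indep Z ↔ N.Indep Z ∧ Z ⊆ X := by
    intro Z; rw [hM]; exact Matroid.restrict_indep_iff
  have hYE : Y ⊆ M.E := hME ▸ hYX
  have hclN : N.closure (M.closure Y) = N.closure Y := by
    refine subset_antisymm ?_ (N.closure_subset_closure (M.subset_closure Y hYE))
    have h1 : M.closure Y ⊆ N.closure Y := hM ▸ closure_sub N X Y hXN hYX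
    exact (N.closure_subset_closure h1).trans (by rw [N.closure_closure])
  have hecl_iff : e ∈ N.closure Y ↔ F₁ ⊆ M.closure Y := by
    rw [← hclN]; exact hcut _ (flat_closure M Y)
  constructor
  · intro h
    have hNY : N.Indep Y := h.subset (subset_insert _ _)
    have hMY : M.Indep Y := (hMindep Y).2 ⟨hNY, hYX⟩
    have hecl : e ∉ N.closure Y :=
      ((hNY.insert_indep_iff_of_notMem heY).1 h).2
    obtain ⟨f, hfF, hfcl⟩ := not_subset.1 (fun hs => hecl (hecl_iff.2 hs))
    have hfE : f ∈ M.E := hME ▸ hF₁X hfF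
    have hfY : f ∉ Y := fun hf => hfcl (M.subset_closure Y hYE hf)
    exact ⟨f, hfF, hfY, (hMY.insert_indep_iff_of_notMem hfY).2 ⟨hfE, hfcl⟩⟩
  · rintro ⟨f, hfF, hfY, hMf⟩
    have hMY : M.Indep Y := hMf.subset (subset_insert _ _)
    have hfcl : f ∉ M.closure Y := ((hMY.insert_indep_iff_of_notMem hfY).1 hMf).2
    have hNY : N.Indep Y := ((hMindep Y).1 hMY).1
    rw [hNY.insert_indep_iff_of_notMem heY]
    refine ⟨hNE ▸ mem_insert _ _, fun hecl => hfcl ((hecl_iff.1 hecl) hfF)⟩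

lemma chain'_mem_of_last {A : α → α → Prop} {V : Set α}
    (hA : ∀ x y, A x y → x ∈ V ∧ y ∈ V) :
    ∀ (p : List α) (t : α), p.Chain' A → p.getLast? = some t → t ∈ V → ∀ v ∈ p, v ∈ V := by
  intro p
  induction p with
  | nil => simp
  | cons a l ih =>
    intro t hc hl ht v hv
    cases l with
    | nil =>
      simp only [List.getLast?_singleton, Option.some.injEq] at hl
      simp only [List.mem_singleton] at hv
      subst hl hv; exact ht
    | cons b l' =>
      rw [List.getLast?_cons_cons] at hl
      simp only [List.Chain', List.isChain_cons_cons] at hc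
      rcases List.mem_cons.1 hv with rfl | hv
      · exact (hA _ _ hc.1).1
      · exact ih t hc.2 hl ht v hv

lemma head_or_pred {A : α → α → Prop} :
    ∀ (p : List α) (h v : α), p.Chain' A → p.head? = some h → v ∈ p →
      v = h ∨ ∃ u, A u v := by
  intro p
  induction p with
  | nil => simp
  | cons a l ih =>
    intro h v hc hh hv
    simp only [List.head?_cons, Option.some.injEq] at hh
    subst hh
    rcases List.mem_cons.1 hv with rfl | hv
    · exact Or.inl rfl
    · cases l with
      | nil => simp at hv
      | cons b l' =>
        simp only [List.Chain', List.isChain_cons_cons] at hc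
        rcases ih b v hc.2 rfl hv with rfl | h'
        · exact Or.inr ⟨a, hc.1⟩
        · exact Or.inr h'

lemma chain'_of_forall {A A' : α → α → Prop} :
    ∀ (p : List α), p.Chain' A' → (∀ u v, u ∈ p → v ∈ p → A' u v → A u v) → p.Chain' A := by
  intro p
  induction p with
  | nil => exact fun _ _ => List.isChain_nil
  | cons a l ih =>
    intro hc h
    cases l with
    | nil => exact List.isChain_singleton _
    | cons b l' =>
      simp only [List.Chain', List.isChain_cons_cons] at hc ⊢
      exact ⟨h a b (by simp) (by simp) hc.1,
        ih hc.2 fun u v hu hv => h u v (List.mem_cons_of_mem _ hu) (List.mem_cons_of_mem _ hv)⟩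

lemma IsRouting.mono {A A' : α → α → Prop} {R : Set (List α)} {Y T : Set α}
    (h : IsRouting A R Y T) (hAA : ∀ x y, A x y → A' x y) : IsRouting A' R Y T := by
  obtain ⟨h1, h2, h3, h4⟩ := h
  exact ⟨fun p hp => ⟨(h1 p hp).1, (h1 p hp).2.1, (h1 p hp).2.2.imp hAA⟩, h2, h3, h4⟩

lemma routing_mem_V {A : α → α → Prop} {R : Set (List α)} {Y T V : Set α}
    (hr : IsRouting A R Y T) (hTV : T ⊆ V) (hA : ∀ x y, A x y → x ∈ V ∧ y ∈ V) :
    ∀ p ∈ R, ∀ v ∈ p, v ∈ V := by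
  intro p hp v hv
  obtain ⟨t, htT, hlt⟩ := hr.2.2.1 p hp
  exact chain'_mem_of_last hA p t (hr.1 p hp).2.2 hlt (hTV htT) v hv

/-- A path in the extended digraph whose head is not `e` avoids `e` and is a path
in the original digraph. -/
lemma path_restrict {A : α → α → Prop} {e : α} {F₁ V : Set α}
    (heV : e ∉ V) (heF : e ∉ F₁) (hAV : ∀ x y, A x y → x ∈ V ∧ y ∈ V)
    {p : List α} {x : α}
    (hp : IsDiPath (fun x y => A x y ∨ (x = e ∧ y ∈ F₁)) p)
    (hx : p.head? = some x) (hxe : x ≠ e) :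
    e ∉ p ∧ IsDiPath A p := by
  have hep : e ∉ p := by
    intro he
    rcases head_or_pred p x e hp.2.2 hx he with h | ⟨u, hu⟩
    · exact hxe h.symm
    · rcases hu with h | ⟨_, h⟩
      · exact heV (hAV _ _ h).2
      · exact heF h
  exact ⟨hep, hp.1, hp.2.1,
    chain'_of_forall p hp.2.2 fun u v hu _ h =>
      h.resolve_right fun h' => hep (h'.1 ▸ hu)⟩

/-- Restricting a routing in the extended digraph to the paths starting in a
set `Z` avoiding `e` gives a routing in the original digraph. -/
lemma routing_restrict {A : α → α → Prop} {e : α} {F₁ V T Y : Set α} {R : Set (List α)}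
    (heV : e ∉ V) (heF : e ∉ F₁) (hAV : ∀ x y, A x y → x ∈ V ∧ y ∈ V)
    (Z : Set α) (hZY : Z ⊆ Y) (heZ : e ∉ Z)
    (hR : IsRouting (fun x y => A x y ∨ (x = e ∧ y ∈ F₁)) R Y T) :
    IsRouting A {q | q ∈ R ∧ ∃ x ∈ Z, q.head? = some x} Z T := by
  refine ⟨?_, ?_, ?_, ?_⟩
  · rintro p ⟨hpR, x, hxZ, hx⟩
    exact (path_restrict heV heF hAV (hR.1 p hpR) hx fun h => heZ (h ▸ hxZ)).2
  · intro x hx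
    obtain ⟨p, hpR, hph⟩ := hR.2.1 x (hZY hx)
    exact ⟨p, ⟨hpR, x, hx, hph⟩, hph⟩
  · rintro p ⟨hpR, -⟩
    exact hR.2.2.1 p hpR
  · rintro p ⟨hpR, -⟩ q ⟨hqR, -⟩ hpq
    exact hR.2.2.2 p hpR q hqR hpq

lemma not_mem_of_routing_restrict {A : α → α → Prop} {e : α} {F₁ V T Y : Set α}
    {R : Set (List α)}
    (heV : e ∉ V) (heF : e ∉ F₁) (hAV : ∀ x y, A x y → x ∈ V ∧ y ∈ V)
    {Z : Set α} (heZ : e ∉ Z)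
    (hR : IsRouting (fun x y => A x y ∨ (x = e ∧ y ∈ F₁)) R Y T)
    {q : List α} (hq : q ∈ {q | q ∈ R ∧ ∃ x ∈ Z, q.head? = some x}) : e ∉ q := by
  obtain ⟨hqR, x, hxZ, hx⟩ := hq
  exact (path_restrict heV heF hAV (hR.1 q hqR) hx fun h => heZ (h ▸ hxZ)).1

lemma mem_of_head? {l : List α} {x : α} (h : l.head? = some x) : x ∈ l := by
  cases l with
  | nil => simp at h
  | cons a l =>
    simp only [List.head?_cons, Option.some.injEq] at h
    exact h ▸ List.mem_cons_self

end GammoidAux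

/-- If `N` arises from the gammoid `M = N ↾ X` by adding a single element `e` in general
position on a flat `F₁` of `M`, then adding the vertex `e` with arcs from `e` to every element
of `F₁` to a representation of `M` (not using `e`) yields a representation of `N`;
in particular `N` is again a gammoid. -/
theorem extension_general_position_gammoid {α : Type*} (M N : Matroid α) (X : Set α) (e : α)
    (F₁ : Set α) (A : α → α → Prop) (V T : Set α)
    (hM : M = N ↾ X) (hNE : N.E = insert e X) (heX : e ∉ X)
    (hF₁ : M.IsFlat F₁)
    (hcut : ∀ F : Set α, M.IsFlat F → (e ∈ N.closure F ↔ F₁ ⊆ F))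
    (hrep : RepresentsOn A V T M) (heV : e ∉ V) :
    RepresentsOn (fun x y => A x y ∨ (x = e ∧ y ∈ F₁)) (insert e V) T N := by
  obtain ⟨hEV, hTV, hAV, hiff⟩ := hrep
  have hME : M.E = X := by rw [hM]; rfl
  have hF₁X : F₁ ⊆ X := hME ▸ hF₁.subset_ground
  have heF : e ∉ F₁ := fun h => heX (hF₁X h)
  have hXV : X ⊆ V := hME ▸ hEV
  have hMindep : ∀ Z, M.Indep Z ↔ N.Indep Z ∧ Z ⊆ X := by
    intro Z; rw [hM]; exact Matroid.restrict_indep_iff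
  refine ⟨?_, hTV.trans (subset_insert _ _), ?_, ?_⟩
  · rw [hNE]; exact insert_subset_insert hXV
  · rintro x y (h | ⟨rfl, hy⟩)
    · exact ⟨Or.inr (hAV x y h).1, Or.inr (hAV x y h).2⟩
    · exact ⟨mem_insert _ _, Or.inr (hXV (hF₁X hy))⟩
  intro Y
  constructor
  · -- from independence to routing
    intro hY
    have hYE : Y ⊆ N.E := hY.subset_ground
    refine ⟨hYE, ?_⟩
    by_cases heY : e ∈ Y
    · -- `e ∈ Y`
      have hY'X : Y \ {e} ⊆ X := by
        intro x hx
        rcases (hNE ▸ hYE) hx.1 with h | h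
        · exact absurd h hx.2
        · exact h
      have hins : insert e (Y \ {e}) = Y := by
        rw [insert_diff_singleton, insert_eq_of_mem heY]
      obtain ⟨f, hfF, hfY', hMf⟩ :=
        (GammoidAux.key_lemma M N X e F₁ hM hNE hF₁X hcut (Y \ {e}) hY'X
          (fun h => h.2 rfl)).1 (by rwa [hins])
      obtain ⟨-, R₀, hR₀⟩ := (hiff _).1 hMf
      obtain ⟨p, hpR, hph⟩ := hR₀.2.1 f (mem_insert _ _)
      have hmemV : ∀ q ∈ R₀, ∀ v ∈ q, v ∈ V := GammoidAux.routing_mem_V hR₀ hTV hAV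
      have hpp := hR₀.1 p hpR
      refine ⟨insert (e :: p) (R₀ \ {p}), ?_, ?_, ?_, ?_⟩
      · rintro q (rfl | ⟨hqR, -⟩)
        · refine ⟨List.cons_ne_nil _ _,
            List.nodup_cons.2 ⟨fun h => heV (hmemV p hpR e h), hpp.2.1⟩, ?_⟩
          refine List.isChain_cons.2 ⟨?_, hpp.2.2.imp fun _ _ h => Or.inl h⟩
          intro b hb
          rw [hph] at hb
          obtain rfl : f = b := by simpa using hb
          exact Or.inr ⟨rfl, hfF⟩
        · have := hR₀.1 q hqR
          exact ⟨this.1, this.2.1, this.2.2.imp fun _ _ h => Or.inl h⟩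
      · intro x hx
        by_cases hxe : x = e
        · exact ⟨e :: p, mem_insert _ _, by rw [hxe]; rfl⟩
        · obtain ⟨q, hqR, hqh⟩ := hR₀.2.1 x (Or.inr ⟨hx, hxe⟩)
          have hqp : q ≠ p := by
            rintro rfl
            rw [hph] at hqh
            obtain rfl : f = x := by simpa using hqh
            exact hfY' ⟨hx, hxe⟩
          exact ⟨q, Or.inr ⟨hqR, hqp⟩, hqh⟩
      · rintro q (rfl | ⟨hqR, -⟩)
        · obtain ⟨t, htT, hlt⟩ := hR₀.2.2.1 p hpR
          refine ⟨t, htT, ?_⟩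
          cases p with
          | nil => exact absurd rfl hpp.1
          | cons a l => rw [List.getLast?_cons_cons]; exact hlt
        · exact hR₀.2.2.1 q hqR
      · rintro q1 (rfl | ⟨h1R, h1p⟩) q2 (rfl | ⟨h2R, h2p⟩) hne v hv hv2
        · exact hne rfl
        · rcases List.mem_cons.1 hv with rfl | hvp
          · exact heV (hmemV q2 h2R v hv2)
          · exact hR₀.2.2.2 p hpR q2 h2R (fun h => h2p h.symm) v hvp hv2
        · rcases List.mem_cons.1 hv2 with rfl | hvp
          · exact heV (hmemV q1 h1R v hv)
          · exact hR₀.2.2.2 q1 h1R p hpR (fun h => h1p h) v hv hvp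
        · exact hR₀.2.2.2 q1 h1R q2 h2R hne v hv hv2
    · -- `e ∉ Y`
      have hYX : Y ⊆ X := fun x hx =>
        ((hNE ▸ hYE) hx).resolve_left (fun h => heY (h ▸ hx))
      have hMY : M.Indep Y := (hMindep Y).2 ⟨hY, hYX⟩
      obtain ⟨-, R, hR⟩ := (hiff Y).1 hMY
      exact ⟨R, GammoidAux.IsRouting.mono hR fun x y h => Or.inl h⟩
  · -- from routing to independence
    rintro ⟨hYE, R, hR⟩
    by_cases heY : e ∈ Y
    · have hY'X : Y \ {e} ⊆ X := by
        intro x hx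
        rcases (hNE ▸ hYE) hx.1 with h | h
        · exact absurd h hx.2
        · exact h
      have hins : insert e (Y \ {e}) = Y := by
        rw [insert_diff_singleton, insert_eq_of_mem heY]
      have heY' : e ∉ Y \ {e} := fun h => h.2 rfl
      obtain ⟨p, hpR, hph⟩ := hR.2.1 e heY
      have hpath := hR.1 p hpR
      obtain ⟨t, htT, hlt⟩ := hR.2.2.1 p hpR
      cases p with
      | nil => simp at hph
      | cons a l =>
        obtain rfl : e = a := by simpa using hph.symm
        cases l with
        | nil =>
          obtain rfl : e = t := by simpa using hlt
          exact absurd (hTV htT) heV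
        | cons f rest =>
          have hef : A e f ∨ (e = e ∧ f ∈ F₁) := (List.isChain_cons_cons.1 hpath.2.2).1
          have hfF : f ∈ F₁ := (hef.resolve_left fun h => heV (hAV _ _ h).1).2
          have hen : e ∉ f :: rest := (List.nodup_cons.1 hpath.2.1).1
          have hfX : f ∈ X := hF₁X hfF
          have hS := GammoidAux.routing_restrict heV heF hAV (Y \ {e})
            diff_subset heY' hR
          have hfY' : f ∉ Y \ {e} := by
            intro hf
            obtain ⟨q, hqR, hqh⟩ := hR.2.1 f hf.1
            have hfq : f ∈ q := GammoidAux.mem_of_head? hqh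
            have hqp : q ≠ e :: f :: rest := by
              rintro rfl
              have hef' : e = f := by simpa using hqh
              exact heF (show e ∈ F₁ from hef' ▸ hfF)
            exact hR.2.2.2 (e :: f :: rest) hpR q hqR (fun h => hqp h.symm) f
              (by simp) hfq
          have hfpath : IsDiPath A (f :: rest) := by
            refine ⟨List.cons_ne_nil _ _, (List.nodup_cons.1 hpath.2.1).2, ?_⟩
            refine GammoidAux.chain'_of_forall _ (List.isChain_cons_cons.1 hpath.2.2).2 ?_
            intro u v hu _ h
            exact h.resolve_right fun h' => hen (h'.1 ▸ hu)
          have hrout : IsRouting A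
              (insert (f :: rest) {q | q ∈ R ∧ ∃ x ∈ Y \ {e}, q.head? = some x})
              (insert f (Y \ {e})) T := by
            refine ⟨?_, ?_, ?_, ?_⟩
            · rintro q (rfl | hq)
              · exact hfpath
              · exact hS.1 q hq
            · rintro x (rfl | hx)
              · exact ⟨x :: rest, mem_insert _ _, rfl⟩
              · obtain ⟨q, hq, hqh⟩ := hS.2.1 x hx
                exact ⟨q, Or.inr hq, hqh⟩
            · rintro q (rfl | hq)
              · exact ⟨t, htT, by rw [List.getLast?_cons_cons] at hlt; exact hlt⟩
              · exact hS.2.2.1 q hq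
            · rintro q1 (rfl | hq1) q2 (rfl | hq2) hne v hv hv2
              · exact hne rfl
              · have hq2p : q2 ≠ e :: f :: rest := fun h =>
                  GammoidAux.not_mem_of_routing_restrict heV heF hAV heY' hR hq2
                    (h ▸ List.mem_cons_self)
                exact hR.2.2.2 (e :: f :: rest) hpR q2 hq2.1 (fun h => hq2p h.symm) v
                  (List.mem_cons_of_mem _ hv) hv2
              · have hq1p : q1 ≠ e :: f :: rest := fun h =>
                  GammoidAux.not_mem_of_routing_restrict heV heF hAV heY' hR hq1
                    (h ▸ List.mem_cons_self)
                exact hR.2.2.2 q1 hq1.1 (e :: f :: rest) hpR hq1p v hv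
                  (List.mem_cons_of_mem _ hv2)
              · exact hS.2.2.2 q1 hq1 q2 hq2 hne v hv hv2
          have hfME : f ∈ M.E := by rw [hME]; exact hfX
          have hY'ME : Y \ {e} ⊆ M.E := by rw [hME]; exact hY'X
          have hMf : M.Indep (insert f (Y \ {e})) :=
            (hiff _).2 ⟨insert_subset hfME hY'ME, _, hrout⟩
          have := (GammoidAux.key_lemma M N X e F₁ hM hNE hF₁X hcut (Y \ {e}) hY'X heY').2
            ⟨f, hfF, hfY', hMf⟩
          rwa [hins] at this
    · have hYX : Y ⊆ X := fun x hx =>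
        ((hNE ▸ hYE) hx).resolve_left (fun h => heY (h ▸ hx))
      have hS := GammoidAux.routing_restrict heV heF hAV Y subset_rfl heY hR
      have hYME : Y ⊆ M.E := by rw [hME]; exact hYX
      have hMY : M.Indep Y := (hiff Y).2 ⟨hYME, _, hS⟩
      exact ((hMindep Y).1 hMY).1
end
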